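/- arXiv:2004.14760 — 2 statements merged into one kernel-verified Lean document; each statement's English description precedes it below -/
import Mathlib

section
/- Let m ≥ 2, k ∈ {1,…,m−1}, and let C ⊆ {1,…,2^m−1} be a set of 3·2^{k−1} consecutive integers. Then every gap of the set ψ(C) ∪ {0,1} is at most 5/2^{k+2}, where ψ(n) = Σ_{i=1}^m ((e_{i−1} + e_i) mod 2)/2^i with e₀ := 0. -/
/-- The `i`-th digit (1-based) of `n` in base `b`, with the convention that the
`0`-th digit is `0`. -/
def nthDigit (b n i : ℕ) : ℕ := if i = 0 then 0 else n / b ^ (i - 1) % b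
/-- The map `ψ(n) = Σ_{i=1}^m ((e_{i-1} + e_i) mod 2)/2^i` with the convention `e₀ = 0`. -/
noncomputable def psiMap (m n : ℕ) : ℝ :=
  ∑ i ∈ Finset.Icc 1 m,
    (((nthDigit 2 n (i - 1) + nthDigit 2 n i) % 2 : ℕ) : ℝ) / (2 : ℝ) ^ i

def dig (n i : ℕ) : ℕ := (nthDigit 2 n (i - 1) + nthDigit 2 n i) % 2

def gray (m n : ℕ) : ℕ := ∑ i ∈ Finset.Icc 1 m, dig n i * 2 ^ (m - i)

lemma nthDigit_zero (b n : ℕ) : nthDigit b n 0 = 0 := rfl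

lemma nthDigit_succ (b n i : ℕ) : nthDigit b n (i+1) = n / b ^ i % b := by
  simp [nthDigit]

lemma dig_le_one (n i : ℕ) : dig n i ≤ 1 := by
  unfold dig; omega

lemma dig_one (n : ℕ) : dig n 1 = n % 2 := by
  unfold dig
  rw [show (1:ℕ) - 1 = 0 from rfl, nthDigit_zero, show (1:ℕ) = 0 + 1 from rfl, nthDigit_succ,
    pow_zero, Nat.div_one]
  omega

lemma nthDigit_shift (s e i : ℕ) (he : e ≤ 1) (hi : 2 ≤ i) :
    nthDigit 2 (2*s+e) i = nthDigit 2 s (i-1) := by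
  obtain ⟨j, rfl⟩ : ∃ j, i = j + 2 := ⟨i - 2, by omega⟩
  show nthDigit 2 (2*s+e) (j+2) = nthDigit 2 s (j+1)
  rw [show j + 2 = (j+1)+1 from rfl, nthDigit_succ, nthDigit_succ]
  have h2 : (2*s+e) / 2 ^ (j+1) = (2*s+e) / 2 / 2 ^ j := by
    rw [pow_succ, mul_comm (2^j) 2, ← Nat.div_div_eq_div_mul]
  have h3 : (2*s+e) / 2 = s := by omega
  rw [h2, h3]

lemma dig_shift (s e i : ℕ) (he : e ≤ 1) (hi : 3 ≤ i) :
    dig (2*s+e) i = dig s (i-1) := by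
  unfold dig
  rw [nthDigit_shift s e i he (by omega)]
  have h : nthDigit 2 (2*s+e) (i-1) = nthDigit 2 s (i-1-1) := nthDigit_shift s e (i-1) he (by omega)
  rw [h]

lemma dig_two (s e : ℕ) (he : e ≤ 1) : dig (2*s+e) 2 = (e + s) % 2 := by
  unfold dig
  rw [nthDigit_shift s e 2 he le_rfl]
  rw [show (2:ℕ) - 1 = 0 + 1 from rfl, nthDigit_succ, nthDigit_succ]
  simp only [pow_zero, Nat.div_one, pow_one]
  omega

lemma gray_zero_m (n : ℕ) : gray 0 n = 0 := by simp [gray]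

lemma sum_Icc_shift (m : ℕ) (f : ℕ → ℕ) :
    ∑ i ∈ Finset.Icc 2 (m+1), f i = ∑ j ∈ Finset.Icc 1 m, f (j+1) := by
  have h : Finset.Icc 2 (m+1) = Finset.map (addRightEmbedding 1) (Finset.Icc 1 m) := by
    rw [Finset.map_add_right_Icc]
  rw [h, Finset.sum_map]
  rfl

lemma gray_split (m n : ℕ) :
    gray (m+1) n = n % 2 * 2 ^ m + ∑ j ∈ Finset.Icc 1 m, dig n (j+1) * 2 ^ (m - j) := by
  unfold gray
  rw [show Finset.Icc 1 (m+1) = insert 1 (Finset.Icc 2 (m+1)) by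
    ext x; simp only [Finset.mem_Icc, Finset.mem_insert]; omega]
  rw [Finset.sum_insert (by simp [Finset.mem_Icc])]
  rw [sum_Icc_shift m (fun i => dig n i * 2 ^ (m + 1 - i))]
  congr 1
  · rw [dig_one, show m + 1 - 1 = m from rfl]
  · apply Finset.sum_congr rfl
    intro j hj
    simp only [Finset.mem_Icc] at hj
    congr 2
    omega

lemma gray_even (m s : ℕ) : gray (m+1) (2*s) = gray m s := by
  rw [gray_split]
  have h1 : (2*s) % 2 = 0 := by omega
  rw [h1]
  simp only [zero_mul, zero_add]
  unfold gray
  apply Finset.sum_congr rfl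
  intro j hj
  simp only [Finset.mem_Icc] at hj
  have he : 2*s = 2*s + 0 := by omega
  rcases Nat.lt_or_ge j 2 with h | h
  · have hj1 : j = 1 := by omega
    subst hj1
    rw [show (1:ℕ)+1 = 2 from rfl, he, dig_two s 0 (by omega), dig_one]
    norm_num
  · rw [he, dig_shift s 0 (j+1) (by omega) (by omega), show j + 1 - 1 = j from rfl]

lemma gray_odd (m s : ℕ) :
    gray (m+2) (2*s+1) + s % 2 * 2^m = 2^(m+1) + (1 + s % 2) % 2 * 2^m + gray (m+1) s := by
  rw [show m + 2 = (m+1)+1 from rfl, gray_split, gray_split]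
  have h1 : (2*s+1) % 2 = 1 := by omega
  rw [h1, one_mul]
  rw [show Finset.Icc 1 (m+1) = insert 1 (Finset.Icc 2 (m+1)) by
    ext x; simp only [Finset.mem_Icc, Finset.mem_insert]; omega]
  rw [Finset.sum_insert (by simp [Finset.mem_Icc])]
  have hterm : dig (2*s+1) (1+1) * 2^(m+1-1) = (1 + s % 2) % 2 * 2^m := by
    rw [show (1:ℕ)+1 = 2 from rfl, dig_two s 1 le_rfl, show m+1-1 = m from rfl]
    have : (1+s) % 2 = (1 + s % 2) % 2 := by omega
    rw [this]
  rw [hterm]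
  have htail : ∑ j ∈ Finset.Icc 2 (m+1), dig (2*s+1) (j+1) * 2^(m+1-j) =
      ∑ j ∈ Finset.Icc 1 m, dig s (j+1) * 2^(m-j) := by
    have h4 : ∑ j ∈ Finset.Icc 1 m, dig s (j+1) * 2^(m-j) =
        ∑ j ∈ Finset.Icc 2 (m+1), dig s j * 2^(m+1-j) := by
      rw [sum_Icc_shift m (fun i => dig s i * 2^(m+1-i))]
      apply Finset.sum_congr rfl
      intro j hj
      simp only [Finset.mem_Icc] at hj
      congr 2
      omega
    rw [h4]
    apply Finset.sum_congr rfl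
    intro j hj
    simp only [Finset.mem_Icc] at hj
    rw [dig_shift s 1 (j+1) le_rfl (by omega), show j+1-1 = j from rfl]
  rw [htail]
  ring

lemma gray_odd_even (m s : ℕ) (hs : s % 2 = 0) :
    gray (m+2) (2*s+1) = 2^(m+1) + 2^m + gray (m+1) s := by
  have := gray_odd m s
  rw [hs] at this
  simpa using this

lemma gray_odd_odd (m s : ℕ) (hs : s % 2 = 1) :
    gray (m+2) (2*s+1) = 2^m + gray (m+1) s := by
  have := gray_odd m s
  rw [hs] at this
  have hge : 2^m ≤ gray (m+1) s := by
    rw [gray_split, hs, one_mul]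
    omega
  omega

lemma two_pow_sum_Icc (m : ℕ) : ∑ i ∈ Finset.Icc 1 m, 2 ^ (m - i) = 2^m - 1 := by
  induction m with
  | zero => simp
  | succ p ih =>
    rw [Finset.sum_Icc_succ_top (by omega)]
    have h : ∑ i ∈ Finset.Icc 1 p, 2 ^ (p + 1 - i) = 2 * ∑ i ∈ Finset.Icc 1 p, 2 ^ (p - i) := by
      rw [Finset.mul_sum]
      apply Finset.sum_congr rfl
      intro i hi
      simp only [Finset.mem_Icc] at hi
      rw [← pow_succ']
      congr 1
      omega
    rw [h, ih]
    have : 1 ≤ 2^p := Nat.one_le_two_pow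
    simp only [Nat.sub_self, pow_zero, pow_succ]
    omega

lemma gray_lt (m n : ℕ) : gray m n < 2^m := by
  have h1 : gray m n ≤ ∑ i ∈ Finset.Icc 1 m, 2 ^ (m - i) := by
    apply Finset.sum_le_sum
    intro i hi
    have := dig_le_one n i
    nlinarith [Nat.pow_pos (n := (m - i)) (show 0 < 2 by norm_num)]
  rw [two_pow_sum_Icc] at h1
  have h3 : (0:ℕ) < 2^m := Nat.pow_pos (n := m) (by norm_num)
  omega

lemma gray_odd_ge (m n : ℕ) (hn : n % 2 = 1) : 2^m ≤ gray (m+1) n := by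
  rw [gray_split, hn, one_mul]
  omega

lemma gray_even_lt (m n : ℕ) (hn : n % 2 = 0) : gray (m+1) n < 2^m := by
  obtain ⟨s, rfl⟩ : ∃ s, n = 2*s := ⟨n/2, by omega⟩
  rw [gray_even]
  exact gray_lt m s
-- IC lemmas
lemma IC_even (l s : ℕ) (hs : s % 2 = 0) :
    4 * gray l (s+1) ≤ 4 * gray l s + 3 * 2^l := by
  match l with
  | 0 => simp [gray_zero_m]
  | 1 =>
    obtain ⟨τ, rfl⟩ : ∃ τ, s = 2*τ := ⟨s/2, by omega⟩
    have h1 : gray 1 (2*τ+1) = (2*τ+1) % 2 := by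
      have := gray_split 0 (2*τ+1); simpa using this
    have h2 : gray 1 (2*τ) = (2*τ) % 2 := by
      have := gray_split 0 (2*τ); simpa using this
    rw [h1, h2]; omega
  | (m+2) =>
    obtain ⟨τ, rfl⟩ : ∃ τ, s = 2*τ := ⟨s/2, by omega⟩
    rcases Nat.mod_two_eq_zero_or_one τ with hτ | hτ
    · have hτ' : τ % 2 = 0 := by omega
      rw [gray_odd_even m τ hτ', gray_even (m+1) τ]
      have e1 : (2:ℕ)^(m+1) = 2 * 2^m := by ring
      have e2 : (2:ℕ)^(m+2) = 4 * 2^m := by ring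
      omega
    · have hτ' : τ % 2 = 1 := by omega
      rw [gray_odd_odd m τ hτ', gray_even (m+1) τ]
      have e1 : (2:ℕ)^(m+1) = 2 * 2^m := by ring
      have e2 : (2:ℕ)^(m+2) = 4 * 2^m := by ring
      omega

lemma IC_odd (l : ℕ) : ∀ s, s % 2 = 1 →
    4 * gray l s ≤ 4 * gray l (s+1) + 3 * 2^l := by
  induction l using Nat.strong_induction_on with
  | _ l ih =>
    intro s hs
    match l with
    | 0 => simp [gray_zero_m]
    | 1 =>
      have h1 : gray 1 s = s % 2 := by have := gray_split 0 s; simpa using this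
      have h2 : gray 1 (s+1) = (s+1) % 2 := by have := gray_split 0 (s+1); simpa using this
      rw [h1, h2]; omega
    | (m+2) =>
      obtain ⟨τ, rfl⟩ : ∃ τ, s = 2*τ+1 := ⟨s/2, by omega⟩
      have hsucc : 2*τ+1+1 = 2*(τ+1) := by ring
      rw [hsucc, gray_even (m+1) (τ+1)]
      rcases Nat.mod_two_eq_zero_or_one τ with hτ | hτ
      · have hτ' : τ % 2 = 0 := by omega
        rw [gray_odd_even m τ hτ']
        have h1 : gray (m+1) τ < 2^m := gray_even_lt m τ hτ'
        have h2 : 2^m ≤ gray (m+1) (τ+1) := gray_odd_ge m (τ+1) (by omega)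
        have e1 : (2:ℕ)^(m+1) = 2 * 2^m := by ring
        have e2 : (2:ℕ)^(m+2) = 4 * 2^m := by ring
        omega
      · have hτ' : τ % 2 = 1 := by omega
        rw [gray_odd_odd m τ hτ']
        have h1 : 4 * gray (m+1) τ ≤ 4 * gray (m+1) (τ+1) + 3 * 2^(m+1) :=
          ih (m+1) (by omega) τ hτ'
        have e1 : (2:ℕ)^(m+1) = 2 * 2^m := by ring
        have e2 : (2:ℕ)^(m+2) = 4 * 2^m := by ring
        omega

-- X claim statements
def X1S (k m t d : ℕ) : Prop := ∃ p q : ℕ,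
  (t + d ≤ p ∧ p < t + d + 3 * 2^(k-1)) ∧ (t ≤ q ∧ q < t + 3 * 2^(k-1)) ∧
  gray m p < 2^(m-1) ∧ 2^(m-1) ≤ gray m q ∧ gray m q ≤ gray m p + 5 * 2^(m-k-2)

def X2S (k m t d : ℕ) : Prop := ∃ p q : ℕ,
  (t + d ≤ p ∧ p < t + d + 3 * 2^(k-1)) ∧ (t ≤ q ∧ q < t + 3 * 2^(k-1)) ∧
  2^(m-1) ≤ gray m p ∧ 2^(m-1) ≤ gray m q ∧
  2^m + gray m q ≤ gray m p + 2^(m-1) + 5 * 2^(m-k-2)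

def X3S (k m t d : ℕ) : Prop := ∃ p q : ℕ,
  (t ≤ p ∧ p < t + 3 * 2^(k-1)) ∧ (t + d ≤ q ∧ q < t + d + 3 * 2^(k-1)) ∧
  2^(m-1) ≤ gray m p ∧ gray m q < 2^(m-1) ∧
  2^m + gray m q ≤ gray m p + 5 * 2^(m-k-2)

def X4S (k m t d : ℕ) : Prop := ∃ p q : ℕ,
  (t ≤ p ∧ p < t + 3 * 2^(k-1)) ∧ (t + d ≤ q ∧ q < t + d + 3 * 2^(k-1)) ∧
  gray m p < 2^(m-1) ∧ gray m q < 2^(m-1) ∧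
  2^(m-1) + gray m q ≤ gray m p + 5 * 2^(m-k-2)

-- base case k = 1
lemma X1_base (m t d : ℕ) (hm : 3 ≤ m) (hd : d ≤ 1) : X1S 1 m t d := by
  obtain ⟨μ, rfl⟩ : ∃ μ, m = μ + 3 := ⟨m - 3, by omega⟩
  have e1 : (2:ℕ)^(μ+1) = 2 * 2^μ := by ring
  have e2 : (2:ℕ)^(μ+2) = 4 * 2^μ := by ring
  have e3 : (2:ℕ)^(μ+3) = 8 * 2^μ := by ring
  have hP : 1 ≤ (2:ℕ)^μ := Nat.one_le_two_pow
  have gE3 : ∀ x, gray (μ+3) (2*x) = gray (μ+2) x := fun x => gray_even (μ+2) x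
  have gOE3 : ∀ x, x % 2 = 0 → gray (μ+3) (2*x+1) = 2^(μ+2) + 2^(μ+1) + gray (μ+2) x :=
    fun x h => gray_odd_even (μ+1) x h
  have gOO3 : ∀ x, x % 2 = 1 → gray (μ+3) (2*x+1) = 2^(μ+1) + gray (μ+2) x :=
    fun x h => gray_odd_odd (μ+1) x h
  have gE2 : ∀ x, gray (μ+2) (2*x) = gray (μ+1) x := fun x => gray_even (μ+1) x
  have gOE2 : ∀ x, x % 2 = 0 → gray (μ+2) (2*x+1) = 2^(μ+1) + 2^μ + gray (μ+1) x :=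
    fun x h => gray_odd_even μ x h
  have gOO2 : ∀ x, x % 2 = 1 → gray (μ+2) (2*x+1) = 2^μ + gray (μ+1) x :=
    fun x h => gray_odd_odd μ x h
  have hsimp : μ + 3 - 1 = μ + 2 := by omega
  have hsimp2 : μ + 3 - 1 - 2 = μ := by omega
  unfold X1S
  rw [hsimp2, hsimp]
  simp only [show (1:ℕ)-1 = 0 from rfl, pow_zero, mul_one]
  rcases Nat.mod_two_eq_zero_or_one t with ht | ht
  · -- t = 2s, p := 2(s+1), q := 2s+1
    obtain ⟨s, rfl⟩ : ∃ s, t = 2*s := ⟨t/2, by omega⟩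
    refine ⟨2*(s+1), 2*s+1, ⟨by omega, by omega⟩, ⟨by omega, by omega⟩, ?_⟩
    rw [gE3 (s+1)]
    rcases Nat.mod_two_eq_zero_or_one s with hs | hs
    · obtain ⟨σ, rfl⟩ : ∃ σ, s = 2*σ := ⟨s/2, by omega⟩
      rw [gOE3 (2*σ) (by omega), gE2 σ]
      have hzlt : gray (μ+1) σ < 2^(μ+1) := gray_lt (μ+1) σ
      have hsx : 2*σ+1 = 2*σ+1 := rfl
      rcases Nat.mod_two_eq_zero_or_one σ with hσ | hσ
      · rw [gOE2 σ hσ]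
        have h1 : gray (μ+1) σ < 2^μ := gray_even_lt μ σ hσ
        omega
      · rw [gOO2 σ hσ]
        omega
    · obtain ⟨σ, rfl⟩ : ∃ σ, s = 2*σ+1 := ⟨s/2, by omega⟩
      rw [gOO3 (2*σ+1) (by omega), show 2*σ+1+1 = 2*(σ+1) by ring, gE2 (σ+1)]
      have hzplt : gray (μ+1) (σ+1) < 2^(μ+1) := gray_lt (μ+1) (σ+1)
      rcases Nat.mod_two_eq_zero_or_one σ with hσ | hσ
      · rw [gOE2 σ hσ]
        have h1 : gray (μ+1) σ < 2^μ := gray_even_lt μ σ hσ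
        have h2 : 2^μ ≤ gray (μ+1) (σ+1) := gray_odd_ge μ (σ+1) (by omega)
        omega
      · rw [gOO2 σ hσ]
        have h1 : 2^μ ≤ gray (μ+1) σ := gray_odd_ge μ σ hσ
        have h2 : gray (μ+1) σ < 2^(μ+1) := gray_lt (μ+1) σ
        have h3 : 4 * gray (μ+1) σ ≤ 4 * gray (μ+1) (σ+1) + 3 * 2^(μ+1) := IC_odd (μ+1) σ hσ
        omega
  · -- t = 2s+1
    obtain ⟨s, rfl⟩ : ∃ s, t = 2*s+1 := ⟨t/2, by omega⟩
    rcases Nat.mod_two_eq_zero_or_one s with hs | hs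
    · -- s even: p := 2(s+1) = t+1, q := 2s+3 = t+2
      obtain ⟨σ, rfl⟩ : ∃ σ, s = 2*σ := ⟨s/2, by omega⟩
      refine ⟨2*(2*σ+1), 2*(2*σ+1)+1, ⟨by omega, by omega⟩, ⟨by omega, by omega⟩, ?_⟩
      rw [gE3 (2*σ+1), gOO3 (2*σ+1) (by omega)]
      rcases Nat.mod_two_eq_zero_or_one σ with hσ | hσ
      · rw [gOE2 σ hσ]
        have h1 : gray (μ+1) σ < 2^μ := gray_even_lt μ σ hσ
        omega
      · rw [gOO2 σ hσ]
        have h1 : 2^μ ≤ gray (μ+1) σ := gray_odd_ge μ σ hσ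
        have h2 : gray (μ+1) σ < 2^(μ+1) := gray_lt (μ+1) σ
        omega
    · -- s odd: p := 2(s+1), q := t = 2s+1
      obtain ⟨σ, rfl⟩ : ∃ σ, s = 2*σ+1 := ⟨s/2, by omega⟩
      refine ⟨2*(2*σ+1+1), 2*(2*σ+1)+1, ⟨by omega, by omega⟩, ⟨by omega, by omega⟩, ?_⟩
      rw [gOO3 (2*σ+1) (by omega), show 2*σ+1+1 = 2*(σ+1) by ring, gE3 (2*(σ+1)),
        gE2 (σ+1)]
      have hzplt : gray (μ+1) (σ+1) < 2^(μ+1) := gray_lt (μ+1) (σ+1)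
      rcases Nat.mod_two_eq_zero_or_one σ with hσ | hσ
      · rw [gOE2 σ hσ]
        have h1 : gray (μ+1) σ < 2^μ := gray_even_lt μ σ hσ
        have h2 : 2^μ ≤ gray (μ+1) (σ+1) := gray_odd_ge μ (σ+1) (by omega)
        omega
      · rw [gOO2 σ hσ]
        have h1 : 2^μ ≤ gray (μ+1) σ := gray_odd_ge μ σ hσ
        have h2 : gray (μ+1) σ < 2^(μ+1) := gray_lt (μ+1) σ
        have h3 : 4 * gray (μ+1) σ ≤ 4 * gray (μ+1) (σ+1) + 3 * 2^(μ+1) := IC_odd (μ+1) σ hσ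
        omega

lemma X2_base (m t d : ℕ) (hm : 3 ≤ m) (hd : d ≤ 1) : X2S 1 m t d := by
  obtain ⟨μ, rfl⟩ : ∃ μ, m = μ + 3 := ⟨m - 3, by omega⟩
  have e2 : (2:ℕ)^(μ+2) = 4 * 2^μ := by ring
  have e3 : (2:ℕ)^(μ+3) = 8 * 2^μ := by ring
  have hsimp : μ + 3 - 1 = μ + 2 := by omega
  have hsimp2 : μ + 3 - 1 - 2 = μ := by omega
  unfold X2S
  rw [hsimp2, hsimp]
  simp only [show (1:ℕ)-1 = 0 from rfl, pow_zero, mul_one]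
  -- common odd witness w
  obtain ⟨w, hw1, hw2, hwodd⟩ : ∃ w, t + 1 ≤ w ∧ w ≤ t + 2 ∧ w % 2 = 1 := by
    rcases Nat.mod_two_eq_zero_or_one t with ht | ht
    · exact ⟨t+1, by omega, by omega, by omega⟩
    · exact ⟨t+2, by omega, by omega, by omega⟩
  have hge : 2^(μ+2) ≤ gray (μ+3) w := gray_odd_ge (μ+2) w hwodd
  have hlt : gray (μ+3) w < 2^(μ+3) := gray_lt (μ+3) w
  exact ⟨w, w, ⟨by omega, by omega⟩, ⟨by omega, by omega⟩, hge, hge, by omega⟩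

lemma X4_base (m t d : ℕ) (hm : 3 ≤ m) (hd : d ≤ 1) : X4S 1 m t d := by
  obtain ⟨μ, rfl⟩ : ∃ μ, m = μ + 3 := ⟨m - 3, by omega⟩
  have e2 : (2:ℕ)^(μ+2) = 4 * 2^μ := by ring
  have hsimp : μ + 3 - 1 = μ + 2 := by omega
  have hsimp2 : μ + 3 - 1 - 2 = μ := by omega
  unfold X4S
  rw [hsimp2, hsimp]
  simp only [show (1:ℕ)-1 = 0 from rfl, pow_zero, mul_one]
  obtain ⟨w, hw1, hw2, hwev⟩ : ∃ w, t + 1 ≤ w ∧ w ≤ t + 2 ∧ w % 2 = 0 := by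
    rcases Nat.mod_two_eq_zero_or_one t with ht | ht
    · exact ⟨t+2, by omega, by omega, by omega⟩
    · exact ⟨t+1, by omega, by omega, by omega⟩
  have hlt : gray (μ+3) w < 2^(μ+2) := gray_even_lt (μ+2) w hwev
  exact ⟨w, w, ⟨by omega, by omega⟩, ⟨by omega, by omega⟩, hlt, hlt, by omega⟩

lemma X3_base (m t d : ℕ) (hm : 3 ≤ m) (hd : d ≤ 1) : X3S 1 m t d := by
  obtain ⟨μ, rfl⟩ : ∃ μ, m = μ + 3 := ⟨m - 3, by omega⟩
  have e1 : (2:ℕ)^(μ+1) = 2 * 2^μ := by ring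
  have e2 : (2:ℕ)^(μ+2) = 4 * 2^μ := by ring
  have e3 : (2:ℕ)^(μ+3) = 8 * 2^μ := by ring
  have hP : 1 ≤ (2:ℕ)^μ := Nat.one_le_two_pow
  have gE3 : ∀ x, gray (μ+3) (2*x) = gray (μ+2) x := fun x => gray_even (μ+2) x
  have gOE3 : ∀ x, x % 2 = 0 → gray (μ+3) (2*x+1) = 2^(μ+2) + 2^(μ+1) + gray (μ+2) x :=
    fun x h => gray_odd_even (μ+1) x h
  have gOO3 : ∀ x, x % 2 = 1 → gray (μ+3) (2*x+1) = 2^(μ+1) + gray (μ+2) x :=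
    fun x h => gray_odd_odd (μ+1) x h
  have gE2 : ∀ x, gray (μ+2) (2*x) = gray (μ+1) x := fun x => gray_even (μ+1) x
  have gOE2 : ∀ x, x % 2 = 0 → gray (μ+2) (2*x+1) = 2^(μ+1) + 2^μ + gray (μ+1) x :=
    fun x h => gray_odd_even μ x h
  have gOO2 : ∀ x, x % 2 = 1 → gray (μ+2) (2*x+1) = 2^μ + gray (μ+1) x :=
    fun x h => gray_odd_odd μ x h
  have hsimp : μ + 3 - 1 = μ + 2 := by omega
  have hsimp2 : μ + 3 - 1 - 2 = μ := by omega
  unfold X3S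
  rw [hsimp2, hsimp]
  simp only [show (1:ℕ)-1 = 0 from rfl, pow_zero, mul_one]
  rcases Nat.mod_two_eq_zero_or_one t with ht | ht
  · -- t = 2s: p := 2s+1, q := 2s+2 = 2(s+1)
    obtain ⟨s, rfl⟩ : ∃ s, t = 2*s := ⟨t/2, by omega⟩
    refine ⟨2*s+1, 2*(s+1), ⟨by omega, by omega⟩, ⟨by omega, by omega⟩, ?_⟩
    rw [gE3 (s+1)]
    rcases Nat.mod_two_eq_zero_or_one s with hs | hs
    · obtain ⟨σ, rfl⟩ : ∃ σ, s = 2*σ := ⟨s/2, by omega⟩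
      rw [gOE3 (2*σ) (by omega), gE2 σ]
      have hzlt : gray (μ+1) σ < 2^(μ+1) := gray_lt (μ+1) σ
      rcases Nat.mod_two_eq_zero_or_one σ with hσ | hσ
      · rw [gOE2 σ hσ]
        have h1 : gray (μ+1) σ < 2^μ := gray_even_lt μ σ hσ
        omega
      · rw [gOO2 σ hσ]
        omega
    · obtain ⟨σ, rfl⟩ : ∃ σ, s = 2*σ+1 := ⟨s/2, by omega⟩
      rw [gOO3 (2*σ+1) (by omega), show 2*σ+1+1 = 2*(σ+1) by ring, gE2 (σ+1)]
      have hzplt : gray (μ+1) (σ+1) < 2^(μ+1) := gray_lt (μ+1) (σ+1)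
      rcases Nat.mod_two_eq_zero_or_one σ with hσ | hσ
      · rw [gOE2 σ hσ]
        have h1 : gray (μ+1) σ < 2^μ := gray_even_lt μ σ hσ
        have h3 : 4 * gray (μ+1) (σ+1) ≤ 4 * gray (μ+1) σ + 3 * 2^(μ+1) := IC_even (μ+1) σ hσ
        omega
      · rw [gOO2 σ hσ]
        have h1 : 2^μ ≤ gray (μ+1) σ := gray_odd_ge μ σ hσ
        have h2 : gray (μ+1) (σ+1) < 2^μ := gray_even_lt μ (σ+1) (by omega)
        omega
  · -- t = 2s+1
    obtain ⟨s, rfl⟩ : ∃ s, t = 2*s+1 := ⟨t/2, by omega⟩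
    rcases Nat.mod_two_eq_zero_or_one s with hs | hs
    · -- s even: p := t = 2s+1, q := 2s+2
      obtain ⟨σ, rfl⟩ : ∃ σ, s = 2*σ := ⟨s/2, by omega⟩
      refine ⟨2*(2*σ)+1, 2*(2*σ+1), ⟨by omega, by omega⟩, ⟨by omega, by omega⟩, ?_⟩
      rw [gOE3 (2*σ) (by omega), gE2 σ, gE3 (2*σ+1)]
      have hzlt : gray (μ+1) σ < 2^(μ+1) := gray_lt (μ+1) σ
      rcases Nat.mod_two_eq_zero_or_one σ with hσ | hσ
      · rw [gOE2 σ hσ]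
        have h1 : gray (μ+1) σ < 2^μ := gray_even_lt μ σ hσ
        omega
      · rw [gOO2 σ hσ]
        omega
    · -- s odd: p := 2s+3 = 2(s+1)+1, q := 2s+2 = 2(s+1)
      obtain ⟨σ, rfl⟩ : ∃ σ, s = 2*σ+1 := ⟨s/2, by omega⟩
      refine ⟨2*(2*σ+1+1)+1, 2*(2*σ+1+1), ⟨by omega, by omega⟩, ⟨by omega, by omega⟩, ?_⟩
      rw [show 2*σ+1+1 = 2*(σ+1) by ring, gOE3 (2*(σ+1)) (by omega), gE3 (2*(σ+1)),
        gE2 (σ+1)]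
      have hzplt : gray (μ+1) (σ+1) < 2^(μ+1) := gray_lt (μ+1) (σ+1)
      omega

section Steps
variable (k ν t d : ℕ)

lemma X1_step (hk : 1 ≤ k) (hd : d ≤ 1)
    (ih : ∀ t' d', d' ≤ 1 → X2S k (ν+3) t' d') : X1S (k+1) (ν+4) t d := by
  have hL : (2:ℕ)^(k+1-1) = 2 * 2^(k-1) := by
    obtain ⟨j, rfl⟩ : ∃ j, k = j+1 := ⟨k-1, by omega⟩
    rw [show j+1+1-1 = j+1 by omega, show j+1-1 = j by omega, pow_succ]; ring
  have G4E : ∀ x, gray (ν+4) (2*x) = gray (ν+3) x := fun x => gray_even (ν+3) x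
  have G4OO : ∀ x, x % 2 = 1 → gray (ν+4) (2*x+1) = 2^(ν+2) + gray (ν+3) x :=
    fun x h => gray_odd_odd (ν+2) x h
  have G4OE : ∀ x, x % 2 = 0 → gray (ν+4) (2*x+1) = 2^(ν+3) + 2^(ν+2) + gray (ν+3) x :=
    fun x h => gray_odd_even (ν+2) x h
  obtain ⟨p', q', ⟨hp1, hp2⟩, ⟨hq1, hq2⟩, hgp, hgq, hsum⟩ :=
    ih (t/2) ((t+d+1)/2 - t/2) (by omega)
  rw [show ν+3-1 = ν+2 by omega] at hgp hgq hsum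
  have hq'odd : q' % 2 = 1 := by
    rcases Nat.mod_two_eq_zero_or_one q' with h | h
    · have h2 : gray (ν+3) q' < 2^(ν+2) := gray_even_lt (ν+2) q' h
      omega
    · exact h
  have e : (2:ℕ)^(ν+3) = 2 * 2^(ν+2) := by ring
  unfold X1S
  rw [show ν+4-1 = ν+3 by omega, show ν+4-(k+1)-2 = ν+3-k-2 by omega]
  refine ⟨2*p', 2*q'+1, ⟨by omega, by omega⟩, ⟨by omega, by omega⟩, ?_, ?_, ?_⟩
  · rw [G4E p']
    exact gray_lt (ν+3) p'
  · rw [G4OO q' hq'odd]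
    omega
  · rw [G4E p', G4OO q' hq'odd]
    omega

lemma X2_step (hk : 1 ≤ k) (hd : d ≤ 1)
    (ih : ∀ t' d', d' ≤ 1 → X1S k (ν+3) t' d') : X2S (k+1) (ν+4) t d := by
  have hL : (2:ℕ)^(k+1-1) = 2 * 2^(k-1) := by
    obtain ⟨j, rfl⟩ : ∃ j, k = j+1 := ⟨k-1, by omega⟩
    rw [show j+1+1-1 = j+1 by omega, show j+1-1 = j by omega, pow_succ]; ring
  have G4OO : ∀ x, x % 2 = 1 → gray (ν+4) (2*x+1) = 2^(ν+2) + gray (ν+3) x :=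
    fun x h => gray_odd_odd (ν+2) x h
  have G4OE : ∀ x, x % 2 = 0 → gray (ν+4) (2*x+1) = 2^(ν+3) + 2^(ν+2) + gray (ν+3) x :=
    fun x h => gray_odd_even (ν+2) x h
  obtain ⟨p', q', ⟨hp1, hp2⟩, ⟨hq1, hq2⟩, hgp, hgq, hsum⟩ :=
    ih (t/2) ((t+d)/2 - t/2) (by omega)
  rw [show ν+3-1 = ν+2 by omega] at hgp hgq
  have hp'even : p' % 2 = 0 := by
    rcases Nat.mod_two_eq_zero_or_one p' with h | h
    · exact h
    · have h2 : 2^(ν+2) ≤ gray (ν+3) p' := gray_odd_ge (ν+2) p' h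
      omega
  have hq'odd : q' % 2 = 1 := by
    rcases Nat.mod_two_eq_zero_or_one q' with h | h
    · have h2 : gray (ν+3) q' < 2^(ν+2) := gray_even_lt (ν+2) q' h
      omega
    · exact h
  have e : (2:ℕ)^(ν+3) = 2 * 2^(ν+2) := by ring
  have e2 : (2:ℕ)^(ν+4) = 4 * 2^(ν+2) := by ring
  unfold X2S
  rw [show ν+4-1 = ν+3 by omega, show ν+4-(k+1)-2 = ν+3-k-2 by omega]
  refine ⟨2*p'+1, 2*q'+1, ⟨by omega, by omega⟩, ⟨by omega, by omega⟩, ?_, ?_, ?_⟩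
  · rw [G4OE p' hp'even]
    omega
  · rw [G4OO q' hq'odd]
    omega
  · rw [G4OE p' hp'even, G4OO q' hq'odd]
    omega

lemma X3_step (hk : 1 ≤ k) (hd : d ≤ 1)
    (ih : ∀ t' d', d' ≤ 1 → X4S k (ν+3) t' d') : X3S (k+1) (ν+4) t d := by
  have hL : (2:ℕ)^(k+1-1) = 2 * 2^(k-1) := by
    obtain ⟨j, rfl⟩ : ∃ j, k = j+1 := ⟨k-1, by omega⟩
    rw [show j+1+1-1 = j+1 by omega, show j+1-1 = j by omega, pow_succ]; ring
  have G4E : ∀ x, gray (ν+4) (2*x) = gray (ν+3) x := fun x => gray_even (ν+3) x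
  have G4OE : ∀ x, x % 2 = 0 → gray (ν+4) (2*x+1) = 2^(ν+3) + 2^(ν+2) + gray (ν+3) x :=
    fun x h => gray_odd_even (ν+2) x h
  obtain ⟨p', q', ⟨hp1, hp2⟩, ⟨hq1, hq2⟩, hgp, hgq, hsum⟩ :=
    ih (t/2) ((t+d+1)/2 - t/2) (by omega)
  rw [show ν+3-1 = ν+2 by omega] at hgp hgq hsum
  have hp'even : p' % 2 = 0 := by
    rcases Nat.mod_two_eq_zero_or_one p' with h | h
    · exact h
    · have h2 : 2^(ν+2) ≤ gray (ν+3) p' := gray_odd_ge (ν+2) p' h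
      omega
  have e : (2:ℕ)^(ν+3) = 2 * 2^(ν+2) := by ring
  have e2 : (2:ℕ)^(ν+4) = 4 * 2^(ν+2) := by ring
  unfold X3S
  rw [show ν+4-1 = ν+3 by omega, show ν+4-(k+1)-2 = ν+3-k-2 by omega]
  refine ⟨2*p'+1, 2*q', ⟨by omega, by omega⟩, ⟨by omega, by omega⟩, ?_, ?_, ?_⟩
  · rw [G4OE p' hp'even]
    omega
  · rw [G4E q']
    omega
  · rw [G4OE p' hp'even, G4E q']
    omega

lemma X4_step (hk : 1 ≤ k) (hd : d ≤ 1)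
    (ih : ∀ t' d', d' ≤ 1 → X3S k (ν+3) t' d') : X4S (k+1) (ν+4) t d := by
  have hL : (2:ℕ)^(k+1-1) = 2 * 2^(k-1) := by
    obtain ⟨j, rfl⟩ : ∃ j, k = j+1 := ⟨k-1, by omega⟩
    rw [show j+1+1-1 = j+1 by omega, show j+1-1 = j by omega, pow_succ]; ring
  have G4E : ∀ x, gray (ν+4) (2*x) = gray (ν+3) x := fun x => gray_even (ν+3) x
  obtain ⟨p', q', ⟨hp1, hp2⟩, ⟨hq1, hq2⟩, hgp, hgq, hsum⟩ :=
    ih ((t+1)/2) ((t+d+1)/2 - (t+1)/2) (by omega)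
  rw [show ν+3-1 = ν+2 by omega] at hgp hgq
  have e : (2:ℕ)^(ν+3) = 2 * 2^(ν+2) := by ring
  unfold X4S
  rw [show ν+4-1 = ν+3 by omega, show ν+4-(k+1)-2 = ν+3-k-2 by omega]
  have hq3 : gray (ν+3) q' < 2^(ν+3) := gray_lt (ν+3) q'
  refine ⟨2*p', 2*q', ⟨by omega, by omega⟩, ⟨by omega, by omega⟩, ?_, ?_, ?_⟩
  · rw [G4E p']
    exact gray_lt (ν+3) p'
  · rw [G4E q']
    omega
  · rw [G4E p', G4E q']
    omega

end Steps

lemma X12_all : ∀ k, 1 ≤ k → ∀ m t d, k + 2 ≤ m → d ≤ 1 → X1S k m t d ∧ X2S k m t d := by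
  intro k
  induction k with
  | zero => omega
  | succ n ih =>
    intro hk m t d hm hd
    rcases Nat.eq_zero_or_pos n with hn | hn
    · subst hn
      exact ⟨X1_base m t d (by omega) hd, X2_base m t d (by omega) hd⟩
    · obtain ⟨ν, rfl⟩ : ∃ ν, m = ν + 4 := ⟨m - 4, by omega⟩
      constructor
      · exact X1_step n ν t d hn hd (fun t' d' hd' => (ih hn (ν+3) t' d' (by omega) hd').2)
      · exact X2_step n ν t d hn hd (fun t' d' hd' => (ih hn (ν+3) t' d' (by omega) hd').1)

lemma X34_all : ∀ k, 1 ≤ k → ∀ m t d, k + 2 ≤ m → d ≤ 1 → X3S k m t d ∧ X4S k m t d := by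
  intro k
  induction k with
  | zero => omega
  | succ n ih =>
    intro hk m t d hm hd
    rcases Nat.eq_zero_or_pos n with hn | hn
    · subst hn
      exact ⟨X3_base m t d (by omega) hd, X4_base m t d (by omega) hd⟩
    · obtain ⟨ν, rfl⟩ : ∃ ν, m = ν + 4 := ⟨m - 4, by omega⟩
      constructor
      · exact X3_step n ν t d hn hd (fun t' d' hd' => (ih hn (ν+3) t' d' (by omega) hd').2)
      · exact X4_step n ν t d hn hd (fun t' d' hd' => (ih hn (ν+3) t' d' (by omega) hd').1)

def YP (m k a y : ℕ) : Prop :=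
  y = 0 ∨ y = 2^m ∨ ∃ n, a ≤ n ∧ n < a + 3*2^(k-1) ∧ gray m n = y

lemma W_window : ∀ k, 1 ≤ k → ∀ m a X, k + 2 ≤ m → X + 5 * 2^(m-k-2) ≤ 2^m + 1 →
    ∃ y, YP m k a y ∧ X ≤ y ∧ y < X + 5 * 2^(m-k-2) := by
  intro k
  induction k with
  | zero => omega
  | succ n ih =>
    intro hk m a X hm hX
    rcases Nat.eq_zero_or_pos n with hn | hn
    · -- base case k = 1
      subst hn
      obtain ⟨μ, rfl⟩ : ∃ μ, m = μ + 3 := ⟨m - 3, by omega⟩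
      rw [show μ+3-(0+1)-2 = μ by omega] at *
      have e2 : (2:ℕ)^(μ+2) = 4 * 2^μ := by ring
      have e3 : (2:ℕ)^(μ+3) = 8 * 2^μ := by ring
      have hP : 1 ≤ (2:ℕ)^μ := Nat.one_le_two_pow
      obtain ⟨p, q, ⟨hp1, hp2⟩, ⟨hq1, hq2⟩, hgp, hgq, hsum⟩ := X1_base (μ+3) a 0 (by omega) (by omega)
      rw [show μ+3-1 = μ+2 by omega] at hgp hgq
      rw [show μ+3-1-2 = μ by omega] at hsum
      rcases le_or_gt X (gray (μ+3) p) with h | h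
      · exact ⟨gray (μ+3) p, Or.inr (Or.inr ⟨p, by omega, by omega, rfl⟩), h, by omega⟩
      · exact ⟨gray (μ+3) q, Or.inr (Or.inr ⟨q, by omega, by omega, rfl⟩), by omega, by omega⟩
    · -- step: n ≥ 1, k = n+1
      obtain ⟨ν, rfl⟩ : ∃ ν, m = ν + 4 := ⟨m - 4, by omega⟩
      have hL : (2:ℕ)^(n+1-1) = 2 * 2^(n-1) := by
        obtain ⟨j, rfl⟩ : ∃ j, n = j+1 := ⟨n-1, by omega⟩
        rw [show j+1+1-1 = j+1 by omega, show j+1-1 = j by omega, pow_succ]; ring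
      have G4E : ∀ x, gray (ν+4) (2*x) = gray (ν+3) x := fun x => gray_even (ν+3) x
      have G4OO : ∀ x, x % 2 = 1 → gray (ν+4) (2*x+1) = 2^(ν+2) + gray (ν+3) x :=
        fun x h => gray_odd_odd (ν+2) x h
      have G4OE : ∀ x, x % 2 = 0 → gray (ν+4) (2*x+1) = 2^(ν+3) + 2^(ν+2) + gray (ν+3) x :=
        fun x h => gray_odd_even (ν+2) x h
      have G3lt : ∀ x, x % 2 = 0 → gray (ν+3) x < 2^(ν+2) := fun x h => gray_even_lt (ν+2) x h
      have G3ge : ∀ x, x % 2 = 1 → 2^(ν+2) ≤ gray (ν+3) x := fun x h => gray_odd_ge (ν+2) x h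
      have e2 : (2:ℕ)^(ν+3) = 2 * 2^(ν+2) := by ring
      have e3 : (2:ℕ)^(ν+4) = 4 * 2^(ν+2) := by ring
      have hB1 : 1 ≤ (2:ℕ)^(ν+4-(n+1)-2) := Nat.one_le_two_pow
      have hBe : ν+4-(n+1)-2 = ν+3-n-2 := by omega
      rw [hBe] at *
      set B := 5 * 2^(ν+3-n-2) with hBdef
      have hBle : B ≤ 5 * 2^(ν+1) := by
        have : (2:ℕ)^(ν+3-n-2) ≤ 2^(ν+1) := Nat.pow_le_pow_right (by norm_num) (by omega)
        omega
      have e4 : (2:ℕ)^(ν+1) * 4 = 4 * 2^(ν+1) := by ring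
      have e5 : (2:ℕ)^(ν+2) = 2 * 2^(ν+1) := by ring
      rcases Nat.lt_or_ge (2^(ν+4)) (X + B) with hT | hT
      · exact ⟨2^(ν+4), Or.inr (Or.inl rfl), by omega, by omega⟩
      rcases le_or_gt (X + B) (2^(ν+3)) with hc1 | hc1
      · -- case 1 : window in left half
        obtain ⟨y', hy', hy1, hy2⟩ := ih hn (ν+3) ((a+1)/2) X (by omega) (by omega)
        rcases hy' with h0 | hH | ⟨n', hn1, hn2, hn3⟩
        · exact ⟨0, Or.inl rfl, by omega, by omega⟩
        · omega
        · refine ⟨y', Or.inr (Or.inr ⟨2*n', by omega, by omega, ?_⟩), hy1, hy2⟩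
          rw [G4E n', hn3]
      rcases le_or_gt X (2^(ν+3)) with hc2 | hc2
      · -- case 2 : window contains the centre 2^(ν+3)
        obtain ⟨p', q', ⟨hp1, hp2⟩, ⟨hq1, hq2⟩, hgp, hgq, hsum⟩ :=
          (X12_all n hn (ν+3) (a/2) ((a+1)/2 - a/2) (by omega) (by omega)).2
        rw [show ν+3-1 = ν+2 by omega] at hgp hgq hsum
        have hq'odd : q' % 2 = 1 := by
          rcases Nat.mod_two_eq_zero_or_one q' with h | h
          · have := G3lt q' h; omega
          · exact h
        rcases le_or_gt X (gray (ν+3) p') with h | h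
        · refine ⟨gray (ν+3) p', Or.inr (Or.inr ⟨2*p', by omega, by omega, G4E p'⟩), h, ?_⟩
          have := gray_lt (ν+3) p'
          omega
        · refine ⟨2^(ν+2) + gray (ν+3) q',
            Or.inr (Or.inr ⟨2*q'+1, by omega, by omega, G4OO q' hq'odd⟩), by omega, by omega⟩
      rcases le_or_gt (X + B) (2^(ν+3) + 2^(ν+2)) with hc3 | hc3
      · -- case 3 : window inside block I
        obtain ⟨y', hy', hy1, hy2⟩ := ih hn (ν+3) (a/2) (X - 2^(ν+2)) (by omega) (by omega)
        rcases hy' with h0 | hH | ⟨n', hn1, hn2, hn3⟩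
        · omega
        · omega
        · have hodd : n' % 2 = 1 := by
            rcases Nat.mod_two_eq_zero_or_one n' with h | h
            · have := G3lt n' h; omega
            · exact h
          refine ⟨2^(ν+2) + y', Or.inr (Or.inr ⟨2*n'+1, by omega, by omega, ?_⟩),
            by omega, by omega⟩
          rw [G4OO n' hodd, hn3]
      rcases le_or_gt X (2^(ν+3) + 2^(ν+2)) with hc4 | hc4
      · -- case 4 : window contains M3
        obtain ⟨p', q', ⟨hp1, hp2⟩, ⟨hq1, hq2⟩, hgp, hgq, hsum⟩ :=
          (X34_all n hn (ν+3) (a/2) 0 (by omega) (by omega)).1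
        rw [show ν+3-1 = ν+2 by omega] at hgp hgq
        have hp'odd : p' % 2 = 1 := by
          rcases Nat.mod_two_eq_zero_or_one p' with h | h
          · have := G3lt p' h; omega
          · exact h
        have hq'even : q' % 2 = 0 := by
          rcases Nat.mod_two_eq_zero_or_one q' with h | h
          · exact h
          · have := G3ge q' h; omega
        rcases le_or_gt X (2^(ν+2) + gray (ν+3) p') with h | h
        · refine ⟨2^(ν+2) + gray (ν+3) p',
            Or.inr (Or.inr ⟨2*p'+1, by omega, by omega, G4OO p' hp'odd⟩), h, ?_⟩
          have := gray_lt (ν+3) p'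
          omega
        · refine ⟨2^(ν+3) + 2^(ν+2) + gray (ν+3) q',
            Or.inr (Or.inr ⟨2*q'+1, by omega, by omega, G4OE q' hq'even⟩), by omega, by omega⟩
      · -- case 5 : window inside block II
        obtain ⟨y', hy', hy1, hy2⟩ := ih hn (ν+3) (a/2) (X - (2^(ν+3) + 2^(ν+2))) (by omega) (by omega)
        rcases hy' with h0 | hH | ⟨n', hn1, hn2, hn3⟩
        · omega
        · omega
        · have heven : n' % 2 = 0 := by
            rcases Nat.mod_two_eq_zero_or_one n' with h | h
            · exact h
            · have := G3ge n' h; omega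
          refine ⟨2^(ν+3) + 2^(ν+2) + y', Or.inr (Or.inr ⟨2*n'+1, by omega, by omega, ?_⟩),
            by omega, by omega⟩
          rw [G4OE n' heven, hn3]

-- ===== inverse of gray =====
def ginv : ℕ → ℕ → ℕ
  | 0, _ => 0
  | (m+1), z =>
    if z < 2^m then 2 * ginv m z
    else if 2^(m-1) ≤ z - 2^m then 2 * ginv m (z - 2^m - 2^(m-1)) + 1
    else 2 * ginv m (z - 2^m + 2^(m-1)) + 1

lemma ginv_lt : ∀ m z, ginv m z < 2^m := by
  intro m
  induction m with
  | zero => intro z; simp [ginv]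
  | succ p ih =>
    intro z
    unfold ginv
    split
    · have := ih z; omega
    · split
      · have := ih (z - 2^p - 2^(p-1)); omega
      · have := ih (z - 2^p + 2^(p-1)); omega

lemma gray_one (n : ℕ) : gray 1 n = n % 2 := by
  have := gray_split 0 n; simpa using this

lemma gray_ginv : ∀ m z, z < 2^m → gray m (ginv m z) = z := by
  intro m
  induction m with
  | zero => intro z hz; interval_cases z; simp [ginv, gray_zero_m]
  | succ p ih =>
    intro z hz
    match p, ih with
    | 0, _ =>
      interval_cases z <;> simp [ginv, gray_one]
    | (r+1), ih =>
      have GE : ∀ x, gray (r+1+1) (2*x) = gray (r+1) x := fun x => gray_even (r+1) x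
      have GOE : ∀ x, x % 2 = 0 → gray (r+1+1) (2*x+1) = 2^(r+1) + 2^r + gray (r+1) x :=
        fun x h => gray_odd_even r x h
      have GOO : ∀ x, x % 2 = 1 → gray (r+1+1) (2*x+1) = 2^r + gray (r+1) x :=
        fun x h => gray_odd_odd r x h
      unfold ginv
      simp only [show r+1-1 = r from by omega]
      split
      · next h =>
        rw [GE (ginv (r+1) z), ih z h]
      · next h =>
        push_neg at h
        split
        · next h2 =>
          have hlt : z - 2^(r+1) - 2^r < 2^(r+1) := by
            have e : (2:ℕ)^(r+2) = 2 * 2^(r+1) := by ring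
            omega
          have hval := ih _ hlt
          have heven : (ginv (r+1) (z - 2^(r+1) - 2^r)) % 2 = 0 := by
            rcases Nat.mod_two_eq_zero_or_one (ginv (r+1) (z - 2^(r+1) - 2^r)) with hh | hh
            · exact hh
            · have := gray_odd_ge r _ hh
              rw [hval] at this
              have e : (2:ℕ)^(r+2) = 4 * 2^r := by ring
              have e2 : (2:ℕ)^(r+1) = 2 * 2^r := by ring
              omega
          rw [GOE _ heven, hval]
          have e : (2:ℕ)^(r+2) = 4 * 2^r := by ring
          have e2 : (2:ℕ)^(r+1) = 2 * 2^r := by ring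
          omega
        · next h2 =>
          push_neg at h2
          have e : (2:ℕ)^(r+2) = 4 * 2^r := by ring
          have e2 : (2:ℕ)^(r+1) = 2 * 2^r := by ring
          have hlt : z - 2^(r+1) + 2^r < 2^(r+1) := by omega
          have hval := ih _ hlt
          have hodd : (ginv (r+1) (z - 2^(r+1) + 2^r)) % 2 = 1 := by
            rcases Nat.mod_two_eq_zero_or_one (ginv (r+1) (z - 2^(r+1) + 2^r)) with hh | hh
            · have := gray_even_lt r _ hh
              rw [hval] at this
              omega
            · exact hh
          rw [GOO _ hodd, hval]
          omega

lemma ginv_gray : ∀ m n, n < 2^m → ginv m (gray m n) = n := by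
  intro m
  induction m with
  | zero => intro n hn; interval_cases n; simp [ginv]
  | succ p ih =>
    intro n hn
    match p, ih with
    | 0, _ =>
      interval_cases n <;> simp [ginv, gray_one]
    | (r+1), ih =>
      have e : (2:ℕ)^(r+2) = 4 * 2^r := by ring
      have e2 : (2:ℕ)^(r+1) = 2 * 2^r := by ring
      rcases Nat.mod_two_eq_zero_or_one n with hpar | hpar
      · obtain ⟨s, rfl⟩ : ∃ s, n = 2*s := ⟨n/2, by omega⟩
        rw [gray_even (r+1) s]
        unfold ginv
        rw [if_pos (gray_lt (r+1) s), ih s (by omega)]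
      · obtain ⟨s, rfl⟩ : ∃ s, n = 2*s+1 := ⟨n/2, by omega⟩
        rcases Nat.mod_two_eq_zero_or_one s with hs | hs
        · rw [gray_odd_even r s hs]
          have hlt : gray (r+1) s < 2^r := gray_even_lt r s hs
          unfold ginv
          simp only [show r+1-1 = r from by omega]
          rw [if_neg (by omega), if_pos (by omega)]
          rw [show 2^(r+1) + 2^r + gray (r+1) s - 2^(r+1) - 2^r = gray (r+1) s by omega]
          rw [ih s (by omega)]
        · rw [gray_odd_odd r s hs]
          have hge : 2^r ≤ gray (r+1) s := gray_odd_ge r s hs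
          have hlt : gray (r+1) s < 2^(r+1) := gray_lt (r+1) s
          unfold ginv
          simp only [show r+1-1 = r from by omega]
          rw [if_neg (by omega), if_neg (by omega)]
          rw [show 2^r + gray (r+1) s - 2^(r+1) + 2^r = gray (r+1) s by omega]
          rw [ih s (by omega)]

-- ===== antipodal lemma =====
lemma nthDigit_add_pow (x μ j : ℕ) (hj : j ≤ μ) :
    nthDigit 2 (x + 2^μ) j = nthDigit 2 x j := by
  match j with
  | 0 => rfl
  | (i+1) =>
    rw [nthDigit_succ, nthDigit_succ]
    have h1 : (2:ℕ)^μ = 2^(μ-i) * 2^i := by rw [← pow_add]; congr 1; omega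
    rw [h1, Nat.add_mul_div_right _ _ (Nat.pow_pos (n := i) (by norm_num))]
    have h2 : 2 ∣ (2:ℕ)^(μ-i) := dvd_pow_self 2 (by omega)
    omega

lemma gray_top (μ x : ℕ) :
    gray (μ+1) x = 2 * (∑ i ∈ Finset.Icc 1 μ, dig x i * 2^(μ-i)) + dig x (μ+1) := by
  unfold gray
  rw [Finset.sum_Icc_succ_top (by omega : 1 ≤ μ+1)]
  rw [Nat.sub_self, pow_zero, mul_one, Finset.mul_sum]
  congr 1
  apply Finset.sum_congr rfl
  intro i hi
  simp only [Finset.mem_Icc] at hi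
  rw [show μ+1-i = (μ-i)+1 by omega, pow_succ]
  ring

lemma gray_antipode (μ x : ℕ) (hμ : 1 ≤ μ) :
    gray (μ+1) (x + 2^μ) / 2 = gray (μ+1) x / 2 ∧
    gray (μ+1) (x + 2^μ) % 2 + gray (μ+1) x % 2 = 1 := by
  have hS : ∑ i ∈ Finset.Icc 1 μ, dig (x + 2^μ) i * 2^(μ-i)
      = ∑ i ∈ Finset.Icc 1 μ, dig x i * 2^(μ-i) := by
    apply Finset.sum_congr rfl
    intro i hi
    simp only [Finset.mem_Icc] at hi
    unfold dig
    rw [nthDigit_add_pow x μ i (by omega), nthDigit_add_pow x μ (i-1) (by omega)]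
  have htop : dig (x + 2^μ) (μ+1) + dig x (μ+1) = 1 := by
    unfold dig
    rw [show μ+1-1 = μ by omega, nthDigit_add_pow x μ μ le_rfl]
    rw [show μ+1 = μ+1 from rfl, nthDigit_succ, nthDigit_succ]
    rw [Nat.add_div_right _ (Nat.pow_pos (n := μ) (by norm_num))]
    omega
  have h1 := gray_top μ (x + 2^μ)
  have h2 := gray_top μ x
  rw [hS] at h1
  have d1 := dig_le_one (x + 2^μ) (μ+1)
  have d2 := dig_le_one x (μ+1)
  omega

-- ===== the special value D =====
def Dnum : ℕ → ℕ
  | 0 => 0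
  | 1 => 1
  | (μ+2) => 4 * Dnum μ + 1

lemma grayD : ∀ μ, gray μ (Dnum μ) + 1 = 2^μ := by
  intro μ
  induction μ using Nat.strong_induction_on with
  | _ μ ih =>
    match μ with
    | 0 => simp [Dnum, gray_zero_m]
    | 1 => simp [Dnum, gray_one]
    | (ν+2) =>
      show gray (ν+2) (4 * Dnum ν + 1) + 1 = 2^(ν+2)
      rw [show 4 * Dnum ν + 1 = 2*(2*Dnum ν)+1 by ring]
      rw [gray_odd_even ν (2*Dnum ν) (by omega), gray_even ν (Dnum ν)]
      have := ih ν (by omega)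
      have e : (2:ℕ)^(ν+2) = 4*2^ν := by ring
      have e2 : (2:ℕ)^(ν+1) = 2*2^ν := by ring
      omega

lemma Dnum_lt : ∀ μ, Dnum μ < 2^μ := by
  intro μ
  induction μ using Nat.strong_induction_on with
  | _ μ ih =>
    match μ with
    | 0 => simp [Dnum]
    | 1 => simp [Dnum]
    | (ν+2) =>
      have h := ih ν (by omega)
      show 4 * Dnum ν + 1 < 2^(ν+2)
      have e : (2:ℕ)^(ν+2) = 4*2^ν := by ring
      omega

lemma Dnum_bounds : ∀ μ, 2 ≤ μ → 2^(μ-2) ≤ Dnum μ ∧ Dnum μ ≤ 3 * 2^(μ-2) - 1 := by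
  intro μ
  induction μ using Nat.strong_induction_on with
  | _ μ ih =>
    match μ with
    | 0 => omega
    | 1 => omega
    | 2 => intro _; simp [Dnum]
    | 3 => intro _; simp [Dnum]
    | (ν+4) =>
      intro _
      have h := ih (ν+2) (by omega) (by omega)
      show 2^(ν+4-2) ≤ 4 * Dnum (ν+2) + 1 ∧ 4 * Dnum (ν+2) + 1 ≤ 3 * 2^(ν+4-2) - 1
      rw [show ν+4-2 = ν+2 by omega]
      rw [show ν+2-2 = ν by omega] at h
      have e : (2:ℕ)^(ν+2) = 4*2^ν := by ring
      have hP : 1 ≤ (2:ℕ)^ν := Nat.one_le_two_pow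
      omega

-- ===== uniqueness lemmas =====
lemma U0 : ∀ μ s, s < 2^μ → gray μ s = 0 → s = 0 := by
  intro μ
  induction μ with
  | zero => intro s h _; omega
  | succ ν ih =>
    intro s hs hg
    rcases Nat.mod_two_eq_zero_or_one s with hp | hp
    · obtain ⟨σ, rfl⟩ : ∃ σ, s = 2*σ := ⟨s/2, by omega⟩
      rw [gray_even ν σ] at hg
      have := ih σ (by omega) hg
      omega
    · have := gray_odd_ge ν s hp
      have : (1:ℕ) ≤ 2^ν := Nat.one_le_two_pow
      omega

lemma U12 : ∀ μ, (∀ s, s < 2^μ → gray μ s + 1 = 2^μ → s = Dnum μ) ∧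
    (∀ s, s < 2^(μ+1) → gray (μ+1) s + 1 = 2^μ → s = 2 * Dnum μ) := by
  intro μ
  induction μ using Nat.strong_induction_on with
  | _ μ ih =>
    have part1 : ∀ s, s < 2^μ → gray μ s + 1 = 2^μ → s = Dnum μ := by
      match μ with
      | 0 => intro s h _; simp [Dnum]; omega
      | 1 =>
        intro s h hg
        rw [gray_one] at hg
        simp [Dnum]; omega
      | (ν+2) =>
        intro s hs hg
        have hp1 : (1:ℕ) ≤ 2^ν := Nat.one_le_two_pow
        have e : (2:ℕ)^(ν+2) = 4*2^ν := by ring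
        have e2 : (2:ℕ)^(ν+1) = 2*2^ν := by ring
        have hodd : s % 2 = 1 := by
          rcases Nat.mod_two_eq_zero_or_one s with hp | hp
          · have hlt : gray (ν+2) s < 2^(ν+1) := gray_even_lt (ν+1) s hp
            omega
          · exact hp
        obtain ⟨σ, rfl⟩ : ∃ σ, s = 2*σ+1 := ⟨s/2, by omega⟩
        rcases Nat.mod_two_eq_zero_or_one σ with hσ | hσ
        · rw [gray_odd_even ν σ hσ] at hg
          have hσval : gray (ν+1) σ + 1 = 2^ν := by omega
          have := (ih ν (by omega)).2 σ (by omega) hσval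
          show 2*σ+1 = 4 * Dnum ν + 1
          omega
        · rw [gray_odd_odd ν σ hσ] at hg
          have := gray_lt (ν+1) σ
          omega
    refine ⟨part1, ?_⟩
    intro s hs hg
    have heven : s % 2 = 0 := by
      rcases Nat.mod_two_eq_zero_or_one s with hp | hp
      · exact hp
      · have := gray_odd_ge μ s hp
        omega
    obtain ⟨σ, rfl⟩ : ∃ σ, s = 2*σ := ⟨s/2, by omega⟩
    rw [gray_even μ σ] at hg
    have := part1 σ (by omega) hg
    omega

lemma U3 : ∀ μ s, 1 ≤ μ → s < 2^μ → gray μ s = 2^(μ-1) → s = 2^μ - 1 := by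
  intro μ
  induction μ using Nat.strong_induction_on with
  | _ μ ih =>
    match μ with
    | 0 => intro s h0; omega
    | 1 =>
      intro s _ hs hg
      rw [gray_one] at hg
      simp at hg ⊢
      omega
    | (ν+2) =>
      intro s _ hs hg
      rw [show ν+2-1 = ν+1 by omega] at hg
      have hp1 : (1:ℕ) ≤ 2^ν := Nat.one_le_two_pow
      have e : (2:ℕ)^(ν+2) = 4*2^ν := by ring
      have e2 : (2:ℕ)^(ν+1) = 2*2^ν := by ring
      have hodd : s % 2 = 1 := by
        rcases Nat.mod_two_eq_zero_or_one s with hp | hp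
        · have hlt : gray (ν+2) s < 2^(ν+1) := gray_even_lt (ν+1) s hp
          omega
        · exact hp
      obtain ⟨σ, rfl⟩ : ∃ σ, s = 2*σ+1 := ⟨s/2, by omega⟩
      rcases Nat.mod_two_eq_zero_or_one σ with hσ | hσ
      · rw [gray_odd_even ν σ hσ] at hg
        omega
      · rw [gray_odd_odd ν σ hσ] at hg
        have hσval : gray (ν+1) σ = 2^(ν+1-1) := by
          rw [show ν+1-1 = ν by omega]; omega
        have := ih (ν+1) (by omega) σ (by omega) (by omega) hσval
        omega

-- ===== adjacent-value preimage distance =====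
lemma ADJ : ∀ l, 2 ≤ l → ∀ s s', s < 2^l → s' < 2^l → gray l s' = gray l s + 1 →
    (2^(l-2) + s ≤ s' ∨ 2^(l-2) + s' ≤ s) ∧ s' ≤ s + 3*2^(l-2) ∧ s ≤ s' + 3*2^(l-2) := by
  intro l
  induction l using Nat.strong_induction_on with
  | _ l ih =>
    match l with
    | 0 => omega
    | 1 => omega
    | 2 =>
      intro _ s s' hs hs' hg
      have hs4 : s < 4 := by norm_num at hs; omega
      have hs4' : s' < 4 := by norm_num at hs'; omega
      have H : ∀ x, x < 4 → ∀ x', x' < 4 → (gray 2 x' = gray 2 x + 1 →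
          (1 + x ≤ x' ∨ 1 + x' ≤ x) ∧ x' ≤ x + 3 ∧ x ≤ x' + 3) := by decide
      have := H s hs4 s' hs4' hg
      norm_num
      omega
    | (r+3) =>
      intro _ s s' hs hs' hg
      have GE : ∀ x, gray (r+3) (2*x) = gray (r+2) x := fun x => gray_even (r+2) x
      have GOE : ∀ x, x % 2 = 0 → gray (r+3) (2*x+1) = 2^(r+2)+2^(r+1)+gray (r+2) x :=
        fun x h => gray_odd_even (r+1) x h
      have GOO : ∀ x, x % 2 = 1 → gray (r+3) (2*x+1) = 2^(r+1)+gray (r+2) x :=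
        fun x h => gray_odd_odd (r+1) x h
      have Glt : ∀ x, x % 2 = 0 → gray (r+3) x < 2^(r+2) := fun x h => gray_even_lt (r+2) x h
      have Gge : ∀ x, x % 2 = 1 → 2^(r+2) ≤ gray (r+3) x := fun x h => gray_odd_ge (r+2) x h
      have hr2 : 2 ≤ r + 2 := by omega
      have e0 : (2:ℕ)^(r+1) = 2*2^r := by ring
      have e1 : (2:ℕ)^(r+2) = 4*2^r := by ring
      have e2 : (2:ℕ)^(r+3) = 8*2^r := by ring
      have eD : (2:ℕ)^(r+2-2) = 2^r := by rw [show r+2-2 = r by omega]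
      have hp1 : (1:ℕ) ≤ 2^r := Nat.one_le_two_pow
      rw [show r+3-2 = r+1 by omega]
      have hDb := Dnum_bounds (r+2) (by omega)
      rw [show r+2-2 = r by omega] at hDb
      have hDlt := Dnum_lt (r+2)
      rcases Nat.lt_or_ge (gray (r+3) s + 1) (2^(r+2)) with hA | hA
      · -- case A : both values below centre, both even
        have hse : s % 2 = 0 := by
          rcases Nat.mod_two_eq_zero_or_one s with hp | hp
          · exact hp
          · have := Gge s hp; omega
        have hse' : s' % 2 = 0 := by
          rcases Nat.mod_two_eq_zero_or_one s' with hp | hp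
          · exact hp
          · have := Gge s' hp; omega
        obtain ⟨σ, rfl⟩ : ∃ σ, s = 2*σ := ⟨s/2, by omega⟩
        obtain ⟨σ', rfl⟩ : ∃ σ', s' = 2*σ' := ⟨s'/2, by omega⟩
        rw [GE σ, GE σ'] at hg
        have := ih (r+2) (by omega) hr2 σ σ' (by omega) (by omega) hg
        rw [show r+2-2 = r by omega] at this
        omega
      rcases Nat.lt_or_ge (gray (r+3) s) (2^(r+2)) with hC | hB
      · -- case C : crossing the centre
        have hz : gray (r+3) s + 1 = 2^(r+2) := by omega
        have hse : s % 2 = 0 := by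
          rcases Nat.mod_two_eq_zero_or_one s with hp | hp
          · exact hp
          · have := Gge s hp; omega
        obtain ⟨σ, rfl⟩ : ∃ σ, s = 2*σ := ⟨s/2, by omega⟩
        rw [GE σ] at hz hg
        have hσD : σ = Dnum (r+2) := (U12 (r+2)).1 σ (by omega) hz
        have hso : s' % 2 = 1 := by
          rcases Nat.mod_two_eq_zero_or_one s' with hp | hp
          · have := Glt s' hp; omega
          · exact hp
        obtain ⟨σ', rfl⟩ : ∃ σ', s' = 2*σ'+1 := ⟨s'/2, by omega⟩
        rcases Nat.mod_two_eq_zero_or_one σ' with hσ' | hσ'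
        · rw [GOE σ' hσ'] at hg
          omega
        · rw [GOO σ' hσ'] at hg
          have hval : gray (r+2) σ' = 2^(r+2-1) := by
            rw [show r+2-1 = r+1 by omega]; omega
          have hσ'v : σ' = 2^(r+2) - 1 := U3 (r+2) σ' (by omega) (by omega) hval
          omega
      · -- case B : both values at or above the centre, both odd
        have hso : s % 2 = 1 := by
          rcases Nat.mod_two_eq_zero_or_one s with hp | hp
          · have := Glt s hp; omega
          · exact hp
        have hso' : s' % 2 = 1 := by
          rcases Nat.mod_two_eq_zero_or_one s' with hp | hp
          · have := Glt s' hp; omega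
          · exact hp
        obtain ⟨σ, rfl⟩ : ∃ σ, s = 2*σ+1 := ⟨s/2, by omega⟩
        obtain ⟨σ', rfl⟩ : ∃ σ', s' = 2*σ'+1 := ⟨s'/2, by omega⟩
        rcases Nat.mod_two_eq_zero_or_one σ with hσ | hσ <;>
          rcases Nat.mod_two_eq_zero_or_one σ' with hσ' | hσ'
        · rw [GOE σ hσ, GOE σ' hσ'] at hg
          have := ih (r+2) (by omega) hr2 σ σ' (by omega) (by omega) (by omega)
          rw [show r+2-2 = r by omega] at this
          omega
        · -- σ even, σ' odd : impossible
          rw [GOE σ hσ, GOO σ' hσ'] at hg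
          have := gray_lt (r+2) σ'
          omega
        · -- σ odd, σ' even : boundary
          rw [GOO σ hσ, GOE σ' hσ'] at hg
          have hl1 := gray_lt (r+2) σ
          have hz0 : gray (r+2) σ' = 0 := by omega
          have hzT : gray (r+2) σ + 1 = 2^(r+2) := by omega
          have hσ'0 : σ' = 0 := U0 (r+2) σ' (by omega) hz0
          have hσD : σ = Dnum (r+2) := (U12 (r+2)).1 σ (by omega) hzT
          omega
        · rw [GOO σ hσ, GOO σ' hσ'] at hg
          have := ih (r+2) (by omega) hr2 σ σ' (by omega) (by omega) (by omega)
          rw [show r+2-2 = r by omega] at this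
          omega

-- residue hitting
lemma exists_mod_in_run (a r M : ℕ) (hM : 0 < M) (hr : r < M) :
    ∃ n, a ≤ n ∧ n < a + M ∧ n % M = r := by
  set b := a % M with hb
  have hbM : b < M := Nat.mod_lt _ hM
  rcases le_or_gt b r with h | h
  · refine ⟨a + (r - b), by omega, by omega, ?_⟩
    rw [Nat.add_mod, ← hb]
    rw [Nat.mod_eq_of_lt (show r - b < M by omega)]
    rw [show b + (r - b) = r by omega]
    exact Nat.mod_eq_of_lt hr
  · refine ⟨a + (r + M - b), by omega, by omega, ?_⟩
    rw [Nat.add_mod, ← hb]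
    rw [Nat.mod_eq_of_lt (show r + M - b < M by omega)]
    rw [show b + (r + M - b) = r + M by omega, Nat.add_mod_right]
    exact Nat.mod_eq_of_lt hr

lemma cover_pair (μ a v : ℕ) (hμ : 1 ≤ μ) (ha : a + 3*2^(μ-1) ≤ 2^(μ+1))
    (hv : v < 2^(μ+1)) (hve : v % 2 = 0) :
    ∃ n, a ≤ n ∧ n < a + 3*2^(μ-1) ∧
      (gray (μ+1) n = v ∨ gray (μ+1) n = v + 1) := by
  have e : (2:ℕ)^(μ+1) = 2*2^μ := by ring
  have e2 : (2:ℕ)^μ = 2*2^(μ-1) := by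
    obtain ⟨j, hj⟩ : ∃ j, μ = j+1 := ⟨μ-1, by omega⟩
    rw [hj, show j+1-1 = j by omega, pow_succ]; ring
  set n₁ := ginv (μ+1) v with hn₁
  have hg1 : gray (μ+1) n₁ = v := gray_ginv (μ+1) v hv
  have hn₁lt : n₁ < 2^(μ+1) := ginv_lt (μ+1) v
  obtain ⟨n, hn1, hn2, hn3⟩ := exists_mod_in_run a (n₁ % 2^μ) (2^μ)
    (Nat.pow_pos (n := μ) (by norm_num)) (Nat.mod_lt _ (Nat.pow_pos (n := μ) (by norm_num)))
  refine ⟨n, hn1, by omega, ?_⟩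
  set r := n₁ % 2^μ with hr
  have hrlt : r < 2^μ := Nat.mod_lt _ (Nat.pow_pos (n := μ) (by norm_num))
  have hncase : n = r ∨ n = r + 2^μ := by
    have hnr : n % 2^μ = r := hn3
    rcases Nat.lt_or_ge n (2^μ) with h | h
    · have h2 : n % 2^μ = n := Nat.mod_eq_of_lt h
      left; omega
    · right
      have h1 : n - 2^μ < 2^μ := by omega
      have h2 : n % 2^μ = (n - 2^μ) % 2^μ := by
        conv_lhs => rw [show n = (n - 2^μ) + 2^μ by omega]
        rw [Nat.add_mod_right]
      have h3 : (n - 2^μ) % 2^μ = n - 2^μ := Nat.mod_eq_of_lt h1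
      omega
  have hn₁case : n₁ = r ∨ n₁ = r + 2^μ := by
    rcases Nat.lt_or_ge n₁ (2^μ) with h | h
    · have h2 : n₁ % 2^μ = n₁ := Nat.mod_eq_of_lt h
      left; omega
    · right
      have h1 : n₁ - 2^μ < 2^μ := by omega
      have h2 : n₁ % 2^μ = (n₁ - 2^μ) % 2^μ := by
        conv_lhs => rw [show n₁ = (n₁ - 2^μ) + 2^μ by omega]
        rw [Nat.add_mod_right]
      have h3 : (n₁ - 2^μ) % 2^μ = n₁ - 2^μ := Nat.mod_eq_of_lt h1
      omega
  obtain ⟨hdiv, hmod⟩ := gray_antipode μ r hμ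
  have hvdiv : v = 2 * (v/2) := by omega
  have hgrlt := gray_lt (μ+1) r
  have hgrlt2 := gray_lt (μ+1) (r + 2^μ)
  rcases hncase with h | h <;> rcases hn₁case with h' | h'
  · left; rw [h, ← h', hg1]
  · -- n = r, n₁ = r + 2^μ
    rw [h' ] at hg1
    rw [h]
    right
    have m1 : gray (μ+1) r % 2 + v % 2 = 1 := by rw [← hg1]; omega
    have m2 : gray (μ+1) r / 2 = v / 2 := by rw [← hg1]; omega
    omega
  · -- n = r + 2^μ, n₁ = r
    rw [h'] at hg1
    rw [h]
    right
    have m1 : gray (μ+1) (r + 2^μ) % 2 + v % 2 = 1 := by rw [← hg1]; omega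
    have m2 : gray (μ+1) (r + 2^μ) / 2 = v / 2 := by rw [← hg1]; omega
    omega
  · left; rw [h, ← h', hg1]

lemma gaps_two (μ a : ℕ) (hμ : 1 ≤ μ) (ha2 : a + 3*2^(μ-1) ≤ 2^(μ+1)) :
    ∀ y₁ y₂ : ℕ,
    (y₁ = 0 ∨ y₁ = 2^(μ+1) ∨ ∃ n, a ≤ n ∧ n < a + 3*2^(μ-1) ∧ gray (μ+1) n = y₁) →
    (y₂ = 0 ∨ y₂ = 2^(μ+1) ∨ ∃ n, a ≤ n ∧ n < a + 3*2^(μ-1) ∧ gray (μ+1) n = y₂) →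
    y₁ < y₂ →
    (∀ y, (y = 0 ∨ y = 2^(μ+1) ∨ ∃ n, a ≤ n ∧ n < a + 3*2^(μ-1) ∧ gray (μ+1) n = y) →
      ¬(y₁ < y ∧ y < y₂)) →
    y₂ ≤ y₁ + 2 := by
  intro y₁ y₂ hY1 hY2 hlt hno
  by_contra hcon
  push_neg at hcon
  have e2 : (2:ℕ)^μ = 2*2^(μ-1) := by
    obtain ⟨j, hj⟩ : ∃ j, μ = j+1 := ⟨μ-1, by omega⟩
    rw [hj, show j+1-1 = j by omega, pow_succ]; ring
  have e : (2:ℕ)^(μ+1) = 4*2^(μ-1) := by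
    rw [pow_succ]; omega
  have hy₂ : y₂ ≤ 2^(μ+1) := by
    rcases hY2 with h | h | ⟨n, _, _, h⟩
    · omega
    · omega
    · have := gray_lt (μ+1) n; omega
  have hmiss : ∀ v, y₁ < v → v < y₂ → ∀ n, a ≤ n → n < a + 3*2^(μ-1) →
      gray (μ+1) n ≠ v := by
    intro v h1 h2 n hn1 hn2 hgn
    exact hno v (Or.inr (Or.inr ⟨n, hn1, hn2, hgn⟩)) ⟨h1, h2⟩
  rcases Nat.mod_two_eq_zero_or_one (y₁+1) with hpar | hpar
  · obtain ⟨n, h1, h2, h3⟩ := cover_pair μ a (y₁+1) hμ ha2 (by omega) hpar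
    rcases h3 with h | h
    · exact hmiss (y₁+1) (by omega) (by omega) n h1 h2 h
    · exact hmiss (y₁+2) (by omega) (by omega) n h1 h2 h
  · rcases Nat.lt_or_ge (y₁+3) y₂ with hc | hc
    · obtain ⟨n, h1, h2, h3⟩ := cover_pair μ a (y₁+2) hμ ha2 (by omega) (by omega)
      rcases h3 with h | h
      · exact hmiss (y₁+2) (by omega) (by omega) n h1 h2 h
      · exact hmiss (y₁+3) (by omega) (by omega) n h1 h2 h
    · -- y₂ = y₁ + 3, y₁+1 odd
      have hy2eq : y₂ = y₁ + 3 := by omega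
      set q₁ := ginv (μ+1) (y₁+1) with hq₁
      set q₂ := ginv (μ+1) (y₁+2) with hq₂
      have hg1 : gray (μ+1) q₁ = y₁+1 := gray_ginv (μ+1) (y₁+1) (by omega)
      have hg2 : gray (μ+1) q₂ = y₁+2 := gray_ginv (μ+1) (y₁+2) (by omega)
      have hq₁lt : q₁ < 2^(μ+1) := ginv_lt (μ+1) (y₁+1)
      have hq₂lt : q₂ < 2^(μ+1) := ginv_lt (μ+1) (y₁+2)
      have hq₁out : ¬(a ≤ q₁ ∧ q₁ < a + 3*2^(μ-1)) := by
        rintro ⟨u1, u2⟩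
        exact hmiss (y₁+1) (by omega) (by omega) q₁ u1 u2 hg1
      have hq₂out : ¬(a ≤ q₂ ∧ q₂ < a + 3*2^(μ-1)) := by
        rintro ⟨u1, u2⟩
        exact hmiss (y₁+2) (by omega) (by omega) q₂ u1 u2 hg2
      have hADJ := ADJ (μ+1) (by omega) q₁ q₂ hq₁lt hq₂lt (by omega)
      rw [show μ+1-2 = μ-1 by omega] at hADJ
      omega

-- ===== bridge to psiMap =====
lemma psiMap_eq (m n : ℕ) : psiMap m n = (gray m n : ℝ) / 2^m := by
  unfold psiMap gray
  rw [Nat.cast_sum, Finset.sum_div]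
  apply Finset.sum_congr rfl
  intro i hi
  simp only [Finset.mem_Icc] at hi
  show ((dig n i : ℕ) : ℝ) / 2^i = ((dig n i * 2^(m-i) : ℕ) : ℝ) / 2^m
  push_cast
  have h2 : (2:ℝ)^m = 2^(m-i) * 2^i := by rw [← pow_add]; congr 1; omega
  rw [h2]
  have hi0 : (2:ℝ)^i ≠ 0 := by positivity
  have hmi : (2:ℝ)^(m-i) ≠ 0 := by positivity
  field_simp

lemma int_gap (m k a y₁ y₂ : ℕ) (hm : 2 ≤ m) (hk1 : 1 ≤ k) (hkm : k + 1 ≤ m)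
    (ha2 : a + 3 * 2 ^ (k - 1) ≤ 2 ^ m)
    (hy₁P : y₁ = 0 ∨ y₁ = 2^m ∨ ∃ n, a ≤ n ∧ n < a + 3*2^(k-1) ∧ gray m n = y₁)
    (hy₂P : y₂ = 0 ∨ y₂ = 2^m ∨ ∃ n, a ≤ n ∧ n < a + 3*2^(k-1) ∧ gray m n = y₂)
    (hylt : y₁ < y₂)
    (hnoy : ∀ y : ℕ, (y = 0 ∨ y = 2^m ∨ ∃ n, a ≤ n ∧ n < a + 3*2^(k-1) ∧ gray m n = y) →
      ¬(y₁ < y ∧ y < y₂)) :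
    2^(k+2) * (y₂ - y₁) ≤ 5 * 2^m := by
  have hy₂le : y₂ ≤ 2^m := by
    rcases hy₂P with h | h | ⟨n, _, _, h⟩
    · omega
    · omega
    · have := gray_lt m n; omega
  rcases Nat.lt_or_ge m (k+2) with hsmall | hbig
  · -- m = k+1
    obtain ⟨μ, rfl⟩ : ∃ μ, m = μ+1 := ⟨m-1, by omega⟩
    have hμk : k = μ := by omega
    subst hμk
    have h2 := gaps_two k a (by omega) ha2 y₁ y₂ hy₁P hy₂P hylt hnoy
    have h3 : 2^(k+2)*(y₂-y₁) ≤ 2^(k+2)*2 := Nat.mul_le_mul_left _ (by omega)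
    have e2 : (2:ℕ)^(k+2)*2 = 4*2^(k+1) := by ring
    omega
  · -- m ≥ k+2
    by_contra hcon
    push_neg at hcon
    have epow : (2:ℕ)^(k+2) * 2^(m-k-2) = 2^m := by
      rw [← pow_add]; congr 1; omega
    have hgapbig : 5 * 2^(m-k-2) + 1 ≤ y₂ - y₁ := by
      by_contra hc2
      push_neg at hc2
      have h3 : 2^(k+2) * (y₂ - y₁) ≤ 2^(k+2) * (5 * 2^(m-k-2)) :=
        Nat.mul_le_mul_left _ (by omega)
      nlinarith [epow]
    obtain ⟨y, hyP, hy1, hy2⟩ := W_window k hk1 m a (y₁+1) (by omega) (by omega)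
    have := hnoy y hyP
    omega

theorem psi_gap_C' (m k a : ℕ) (hm : 2 ≤ m) (hk1 : 1 ≤ k) (hkm : k ≤ m - 1)
    (ha1 : 1 ≤ a) (ha2 : a + 3 * 2 ^ (k - 1) ≤ 2 ^ m) (S : Set ℝ)
    (hS : S = {0, 1} ∪ (fun n => psiMap m n) '' {n : ℕ | a ≤ n ∧ n < a + 3 * 2 ^ (k - 1)}) :
    ∀ t₁ ∈ S, ∀ t₂ ∈ S, t₁ < t₂ → (∀ t ∈ S, ¬(t₁ < t ∧ t < t₂)) →
      t₂ - t₁ ≤ 5 / (2 : ℝ) ^ (k + 2) := by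
  intro t₁ ht₁ t₂ ht₂ hlt hno
  have hk1m : k + 1 ≤ m := by omega
  have hpow : (0:ℝ) < 2^m := by positivity
  have hmemS : ∀ t, t ∈ S ↔ (t = 0 ∨ t = 1 ∨
      ∃ n, (a ≤ n ∧ n < a + 3 * 2 ^ (k - 1)) ∧ psiMap m n = t) := by
    intro t
    rw [hS]
    simp only [Set.mem_union, Set.mem_insert_iff, Set.mem_singleton_iff, Set.mem_image,
      Set.mem_setOf_eq]
    tauto
  have key : ∀ t, t ∈ S → ∃ y : ℕ, y ≤ 2^m ∧ t = (y:ℝ)/2^m ∧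
      (y = 0 ∨ y = 2^m ∨ ∃ n, a ≤ n ∧ n < a + 3*2^(k-1) ∧ gray m n = y) := by
    intro t ht
    rcases (hmemS t).1 ht with h | h | ⟨n, ⟨h1, h2⟩, h3⟩
    · exact ⟨0, by omega, by simp [h], Or.inl rfl⟩
    · refine ⟨2^m, le_rfl, ?_, Or.inr (Or.inl rfl)⟩
      rw [h]
      rw [Nat.cast_pow]
      field_simp
      norm_num
    · refine ⟨gray m n, (gray_lt m n).le, ?_, Or.inr (Or.inr ⟨n, h1, h2, rfl⟩)⟩
      rw [← h3, psiMap_eq]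
  have memS : ∀ y : ℕ, (y = 0 ∨ y = 2^m ∨ ∃ n, a ≤ n ∧ n < a + 3*2^(k-1) ∧ gray m n = y) →
      ((y:ℝ)/2^m) ∈ S := by
    intro y hy
    rw [hmemS]
    rcases hy with h | h | ⟨n, h1, h2, h3⟩
    · left; simp [h]
    · right; left
      rw [h, Nat.cast_pow]
      field_simp
      norm_num
    · right; right
      exact ⟨n, ⟨h1, h2⟩, by rw [psiMap_eq, h3]⟩
  have hdivlt : ∀ u v : ℕ, u < v → (u:ℝ)/2^m < (v:ℝ)/2^m := by
    intro u v h
    gcongr <;> exact_mod_cast h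
  obtain ⟨y₁, hy₁le, hy₁eq, hy₁P⟩ := key t₁ ht₁
  obtain ⟨y₂, hy₂le, hy₂eq, hy₂P⟩ := key t₂ ht₂
  have hylt : y₁ < y₂ := by
    by_contra hcon
    push_neg at hcon
    rcases Nat.lt_or_ge y₂ y₁ with h | h
    · have := hdivlt y₂ y₁ h
      rw [← hy₁eq, ← hy₂eq] at this
      linarith
    · have hy : y₁ = y₂ := by omega
      rw [hy₁eq, hy₂eq, hy] at hlt
      linarith
  have hnoy : ∀ y : ℕ, (y = 0 ∨ y = 2^m ∨ ∃ n, a ≤ n ∧ n < a + 3*2^(k-1) ∧ gray m n = y) →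
      ¬(y₁ < y ∧ y < y₂) := by
    rintro y hy ⟨hl, hr⟩
    apply hno ((y:ℝ)/2^m) (memS y hy)
    rw [hy₁eq, hy₂eq]
    exact ⟨hdivlt y₁ y hl, hdivlt y y₂ hr⟩
  -- integer gap bound
  have hgap : 2^(k+2) * (y₂ - y₁) ≤ 5 * 2^m :=
    int_gap m k a y₁ y₂ hm hk1 hk1m ha2 hy₁P hy₂P hylt hnoy
  -- conclude
  rw [hy₁eq, hy₂eq]
  rw [div_sub_div_same]
  rw [div_le_div_iff₀ hpow (by positivity : (0:ℝ) < (2:ℝ)^(k+2))]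
  have hcast : ((y₂:ℝ) - (y₁:ℝ)) = ((y₂ - y₁ : ℕ) : ℝ) := by
    rw [Nat.cast_sub hylt.le]
  rw [hcast]
  calc ((y₂ - y₁ : ℕ) : ℝ) * 2^(k+2) = ((2^(k+2) * (y₂ - y₁) : ℕ) : ℝ) := by push_cast; ring
    _ ≤ ((5 * 2^m : ℕ) : ℝ) := by exact_mod_cast hgap
    _ = 5 * 2^m := by push_cast; ring


/-- For a set `C` of `3·2^{k−1}` consecutive integers in `{1,…,2^m−1}` with
`k ∈ {1,…,m−1}`, every gap of `ψ(C) ∪ {0,1}` is at most `5/2^{k+2}`. -/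
theorem psi_gap_C (m k a : ℕ) (hm : 2 ≤ m) (hk1 : 1 ≤ k) (hkm : k ≤ m - 1)
    (ha1 : 1 ≤ a) (ha2 : a + 3 * 2 ^ (k - 1) ≤ 2 ^ m) (S : Set ℝ)
    (hS : S = {0, 1} ∪ (fun n => psiMap m n) '' {n : ℕ | a ≤ n ∧ n < a + 3 * 2 ^ (k - 1)}) :
    ∀ t₁ ∈ S, ∀ t₂ ∈ S, t₁ < t₂ → (∀ t ∈ S, ¬(t₁ < t ∧ t < t₂)) →
      t₂ - t₁ ≤ 5 / (2 : ℝ) ^ (k + 2) := by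
  exact psi_gap_C' m k a hm hk1 hkm ha1 ha2 S hS
end

section
/- Let b ≥ 2 and m ≥ 2 be integers. Then for every w ∈ {2,…,b}, the open box (1/b − w/b^m, 1/b + 1/b^m) × (1/b^m, (b−w+2)/b − b/b^m) contains no point of the Hammersley point set H_{b,m}; equivalently, for all n ∈ {b^{m−1}−w+1,…,b^{m−1}} one has φ_b(n) ∉ (1/b^m, (b−w+2)/b − b/b^m). -/
/-- The radical-inverse (digit-reversal) function in base `b`, using `m` digits:
`φ_b(n) = e₁/b + e₂/b² + ⋯ + e_m/b^m`. -/
noncomputable def radInv (b m n : ℕ) : ℝ :=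
  ∑ i ∈ Finset.Icc 1 m, (nthDigit b n i : ℝ) / (b : ℝ) ^ i

-- quotient lemma: (b^(m-1) - k) / b^(i-1) = b^(m-i) - 1 for 1 ≤ k ≤ b^(i-1), i ≤ m
lemma quot_lemma (b m i k : ℕ) (hb : 2 ≤ b) (h1 : 1 ≤ k) (hk : k ≤ b ^ (i-1))
    (hi : 1 ≤ i) (him : i ≤ m) :
    (b ^ (m - 1) - k) / b ^ (i - 1) = b ^ (m - i) - 1 := by
  have hbpos : 0 < b ^ (i - 1) := Nat.pow_pos (by omega)
  have hsplit : b ^ (m - 1) - k = b ^ (i - 1) * (b ^ (m - i) - 1) + (b ^ (i - 1) - k) := by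
    have hmul : b ^ (i - 1) * b ^ (m - i) = b ^ (m - 1) := by
      rw [← pow_add]; congr 1; omega
    have hle : b ^ (i - 1) ≤ b ^ (i - 1) * b ^ (m - i) :=
      Nat.le_mul_of_pos_right _ (Nat.pow_pos (by omega))
    rw [Nat.mul_sub, Nat.mul_one, hmul]
    omega
  rw [hsplit, Nat.mul_add_div hbpos, Nat.div_eq_of_lt (by omega), Nat.add_zero]

lemma mod_sub (d k N : ℕ) (h1 : 1 ≤ k) (h2 : k ≤ d) (hd : d ∣ N) (h3 : d ≤ N) :
    (N - k) % d = d - k := by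
  obtain ⟨q, rfl⟩ := hd
  have hq : 1 ≤ q := by
    rcases Nat.eq_zero_or_pos q with h | h
    · subst h; simp at h3; omega
    · exact h
  have h4 : d ≤ d * q := Nat.le_mul_of_pos_right d hq
  have key : d * q - k = d * (q - 1) + (d - k) := by
    rw [Nat.mul_sub, Nat.mul_one]; omega
  rw [key, Nat.mul_add_mod, Nat.mod_eq_of_lt (by omega)]

lemma digit_pow (b m i : ℕ) (hb : 2 ≤ b) (hm : 2 ≤ m) (hi : 1 ≤ i) (him : i ≤ m) :
    nthDigit b (b ^ (m - 1)) i = if i = m then 1 else 0 := by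
  unfold nthDigit
  rw [if_neg (by omega)]
  rcases eq_or_lt_of_le him with rfl | hlt
  · rw [if_pos rfl, Nat.div_self (Nat.pow_pos (by omega)),
      Nat.mod_eq_of_lt (by omega)]
  · rw [if_neg (by omega)]
    have : b ^ (m - 1) / b ^ (i - 1) = b ^ (m - i) := by
      rw [Nat.pow_div (by omega) (by omega)]; congr 1; omega
    rw [this]
    obtain ⟨c, hc⟩ : b ∣ b ^ (m - i) := dvd_pow_self b (by omega)
    rw [hc, Nat.mul_mod_right]

lemma digit_sub (b m i k : ℕ) (hb : 2 ≤ b) (hm : 2 ≤ m) (h1 : 1 ≤ k) (hk : k ≤ b - 1)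
    (hi : 1 ≤ i) (him : i ≤ m) :
    nthDigit b (b ^ (m - 1) - k) i =
      if i = 1 then b - k else if i = m then 0 else b - 1 := by
  unfold nthDigit
  rw [if_neg (by omega)]
  rcases eq_or_lt_of_le hi with rfl | h1i
  · rw [if_pos rfl]
    simp only [Nat.sub_self, pow_zero, Nat.div_one]
    refine mod_sub b k _ h1 (by omega) (dvd_pow_self b (by omega)) ?_
    calc b = b ^ 1 := (pow_one b).symm
    _ ≤ b ^ (m - 1) := Nat.pow_le_pow_right (by omega) (by omega)
  · rw [if_neg (by omega)]
    have hq := quot_lemma b m i k hb h1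
      (le_trans (by omega : k ≤ b) (by calc b = b^1 := (pow_one b).symm
        _ ≤ b ^ (i-1) := Nat.pow_le_pow_right (by omega) (by omega))) hi him
    rw [hq]
    rcases eq_or_lt_of_le him with rfl | hlt
    · rw [if_pos rfl]; simp
    · rw [if_neg (by omega)]
      refine mod_sub b 1 _ le_rfl (by omega) (dvd_pow_self b (by omega)) ?_
      calc b = b ^ 1 := (pow_one b).symm
      _ ≤ b ^ (m - i) := Nat.pow_le_pow_right (by omega) (by omega)

lemma geom_sum (b : ℕ) (hb : 2 ≤ b) :
    ∀ m, 2 ≤ m → ∑ i ∈ Finset.Icc 2 (m - 1), ((b : ℝ) - 1) / (b : ℝ) ^ i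
      = 1 / (b : ℝ) - 1 / (b : ℝ) ^ (m - 1) := by
  have hb0 : (b : ℝ) ≠ 0 := by positivity
  intro m hm
  induction m with
  | zero => omega
  | succ n ih =>
    rcases Nat.lt_or_ge n 2 with h | h
    · interval_cases n
      · omega
      · simp
    · have hn : n + 1 - 1 = n := rfl
      rw [hn]
      have hsplit : Finset.Icc 2 n = insert n (Finset.Icc 2 (n - 1)) := by
        ext x; simp only [Finset.mem_Icc, Finset.mem_insert]; omega
      rw [hsplit, Finset.sum_insert (by simp only [Finset.mem_Icc]; omega), ih h]
      have hne : (b : ℝ) ^ n ≠ 0 := by positivity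
      have hne' : (b : ℝ) ^ (n - 1) ≠ 0 := by positivity
      have hpow : (b : ℝ) ^ n = (b : ℝ) ^ (n - 1) * b := by
        rw [← pow_succ]; congr 1; omega
      field_simp
      rw [hpow]; ring

lemma radInv_pow (b m : ℕ) (hb : 2 ≤ b) (hm : 2 ≤ m) :
    radInv b m (b ^ (m - 1)) = 1 / (b : ℝ) ^ m := by
  unfold radInv
  rw [Finset.sum_eq_single_of_mem m (by simp only [Finset.mem_Icc]; omega)]
  · rw [digit_pow b m m hb hm (by omega) le_rfl, if_pos rfl]; norm_num
  · intro i hi hne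
    simp only [Finset.mem_Icc] at hi
    rw [digit_pow b m i hb hm hi.1 hi.2, if_neg hne]
    norm_num

lemma radInv_sub (b m k : ℕ) (hb : 2 ≤ b) (hm : 2 ≤ m) (h1 : 1 ≤ k) (hk : k ≤ b - 1) :
    radInv b m (b ^ (m - 1) - k) = ((b : ℝ) - k + 1) / b - (b : ℝ) / (b : ℝ) ^ m := by
  have hb0 : (b : ℝ) ≠ 0 := by positivity
  unfold radInv
  have hsplit1 : Finset.Icc 1 m = insert 1 (Finset.Icc 2 m) := by
    ext x; simp only [Finset.mem_Icc, Finset.mem_insert]; omega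
  have hsplit2 : Finset.Icc 2 m = insert m (Finset.Icc 2 (m - 1)) := by
    ext x; simp only [Finset.mem_Icc, Finset.mem_insert]; omega
  rw [hsplit1, Finset.sum_insert (by simp only [Finset.mem_Icc]; omega), hsplit2,
    Finset.sum_insert (by simp only [Finset.mem_Icc]; omega)]
  rw [digit_sub b m 1 k hb hm h1 hk le_rfl (by omega), if_pos rfl]
  rw [digit_sub b m m k hb hm h1 hk (by omega) le_rfl, if_neg (by omega), if_pos rfl]
  have htail : ∑ i ∈ Finset.Icc 2 (m - 1), (nthDigit b (b ^ (m - 1) - k) i : ℝ) / (b : ℝ) ^ i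
      = ∑ i ∈ Finset.Icc 2 (m - 1), ((b : ℝ) - 1) / (b : ℝ) ^ i := by
    refine Finset.sum_congr rfl fun i hi => ?_
    simp only [Finset.mem_Icc] at hi
    rw [digit_sub b m i k hb hm h1 hk (by omega) (by omega), if_neg (by omega),
      if_neg (by omega)]
    rw [Nat.cast_sub (by omega)]
    norm_num
  rw [htail, geom_sum b hb m hm]
  rw [Nat.cast_sub (by omega)]
  have hne' : (b : ℝ) ^ (m - 1) ≠ 0 := by positivity
  have hnem : (b : ℝ) ^ m ≠ 0 := by positivity
  have hpow : (b : ℝ) ^ m = (b : ℝ) ^ (m - 1) * b := by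
    rw [← pow_succ]; congr 1; omega
  field_simp
  rw [hpow]; ring

/-- For `b ≥ 2`, `m ≥ 2` and every `w ∈ {2,…,b}`, the open box
`(1/b − w/b^m, 1/b + 1/b^m) × (1/b^m, (b−w+2)/b − b/b^m)` contains no point of the
base-`b` Hammersley point set; equivalently, `φ_b(n) ∉ (1/b^m, (b−w+2)/b − b/b^m)` for
all `n ∈ {b^{m−1}−w+1,…,b^{m−1}}`. -/
theorem hammersley_empty_box (b m : ℕ) (hb : 2 ≤ b) (hm : 2 ≤ m) :
    ∀ w : ℕ, 2 ≤ w → w ≤ b →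
      (∀ n < b ^ m, ((n : ℝ) / (b : ℝ) ^ m, radInv b m n) ∉
        Set.Ioo (1 / (b : ℝ) - (w : ℝ) / (b : ℝ) ^ m) (1 / (b : ℝ) + 1 / (b : ℝ) ^ m) ×ˢ
        Set.Ioo (1 / (b : ℝ) ^ m) (((b : ℝ) - (w : ℝ) + 2) / (b : ℝ) - (b : ℝ) / (b : ℝ) ^ m)) ∧
      (∀ n : ℕ, b ^ (m - 1) - w + 1 ≤ n → n ≤ b ^ (m - 1) →
        radInv b m n ∉
          Set.Ioo (1 / (b : ℝ) ^ m) (((b : ℝ) - (w : ℝ) + 2) / (b : ℝ) - (b : ℝ) / (b : ℝ) ^ m)) := by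
  intro w hw2 hwb
  have hbR : (0:ℝ) < (b:ℝ) := by positivity
  have hbm : (0:ℝ) < (b:ℝ)^m := by positivity
  have hT : b ≤ b ^ (m - 1) := by
    calc b = b ^ 1 := (pow_one b).symm
    _ ≤ b ^ (m - 1) := Nat.pow_le_pow_right (by omega) (by omega)
  have key : ∀ n : ℕ, b ^ (m - 1) - w + 1 ≤ n → n ≤ b ^ (m - 1) →
      radInv b m n ∉
        Set.Ioo (1 / (b : ℝ) ^ m) (((b : ℝ) - (w : ℝ) + 2) / (b : ℝ) - (b : ℝ) / (b : ℝ) ^ m) := by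
    intro n hn1 hn2 hmem
    obtain ⟨hlo, hhi⟩ := hmem
    rcases eq_or_lt_of_le hn2 with rfl | hlt
    · rw [radInv_pow b m hb hm] at hlo
      exact lt_irrefl _ hlo
    · set k := b ^ (m - 1) - n with hkdef
      have hk1 : 1 ≤ k := by omega
      have hkw : k ≤ w - 1 := by omega
      have hn : n = b ^ (m - 1) - k := by omega
      rw [hn, radInv_sub b m k hb hm hk1 (by omega)] at hhi
      have h2 : ((b:ℝ) - k + 1) / b < ((b:ℝ) - w + 2) / b := by linarith
      rw [div_lt_div_iff_of_pos_right hbR] at h2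
      have h3 : (w:ℝ) < (k:ℝ) + 1 := by linarith
      have h4 : w < k + 1 := by exact_mod_cast h3
      omega
  refine ⟨?_, key⟩
  intro n hn hmem
  obtain ⟨⟨hx1, hx2⟩, hy⟩ := hmem
  have hpow : (b:ℝ)^m = (b:ℝ)^(m-1) * b := by
    rw [← pow_succ]; congr 1; omega
  -- lower bound on n
  have e1 : 1/(b:ℝ) - (w:ℝ)/(b:ℝ)^m = ((b:ℝ)^(m-1) - w)/(b:ℝ)^m := by
    rw [hpow]; field_simp
  rw [e1, div_lt_div_iff_of_pos_right hbm] at hx1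
  have hl : (b:ℝ)^(m-1) < (n:ℝ) + w := by linarith
  have hlN : b^(m-1) < n + w := by exact_mod_cast hl
  -- upper bound on n
  have e2 : 1/(b:ℝ) + 1/(b:ℝ)^m = ((b:ℝ)^(m-1) + 1)/(b:ℝ)^m := by
    rw [hpow]; field_simp
  rw [e2, div_lt_div_iff_of_pos_right hbm] at hx2
  have hu : (n:ℝ) < (b:ℝ)^(m-1) + 1 := by linarith
  have huN : n < b^(m-1) + 1 := by exact_mod_cast hu
  exact key n (by omega) (by omega) hy
end
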